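/- arXiv:1412.3348 — 5 statements merged into one kernel-verified Lean document; each statement's English description precedes it below -/
import Mathlib

section
/- Let X be a metric space homeomorphic to ℝ² with locally finite Hausdorff 2-measure. Then every open ball B ⊂ X has positive Hausdorff 2-measure. -/
open MeasureTheory Metric
open scoped ENNReal

namespace Stmt2Aux

lemma zmod2_add_self : ∀ x : ZMod 2, x + x = 0 := by decide

/-- Telescoping sums mod 2. -/
lemma zmod2_telescope (a : ℕ → ZMod 2) (n : ℕ) :
    (∑ j ∈ Finset.range n, a j) + (∑ j ∈ Finset.range n, a (j + 1)) = a 0 + a n := by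
  induction n with
  | zero => simpa using (zmod2_add_self (a 0)).symm
  | succ n ih =>
      rw [Finset.sum_range_succ, Finset.sum_range_succ]
      linear_combination ih + zmod2_add_self (a n)

/-- The mod-2 indicator of a `{0,1}`-colored edge. -/
def E3 : Fin 3 → Fin 3 → ZMod 2 := fun a b =>
  if (a = 0 ∧ b = 1) ∨ (a = 1 ∧ b = 0) then 1 else 0

lemma E3_eq_zero_of_ne_zero {a b : Fin 3} (ha : a ≠ 0) (hb : b ≠ 0) : E3 a b = 0 := by
  fin_cases a <;> fin_cases b <;> simp_all <;> rfl

lemma E3_eq_zero_of_ne_one {a b : Fin 3} (ha : a ≠ 1) (hb : b ≠ 1) : E3 a b = 0 := by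
  fin_cases a <;> fin_cases b <;> simp_all <;> rfl

/-- Auxiliary map sending color 1 to 1 and others to 0. -/
def phi3 : Fin 3 → ZMod 2 := fun a => if a = 1 then 1 else 0

lemma E3_eq_phi3 {a b : Fin 3} (ha : a ≠ 2) (hb : b ≠ 2) : E3 a b = phi3 a + phi3 b := by
  fin_cases a <;> fin_cases b <;> simp_all <;> rfl

lemma E3_cell {a b a' b' : Fin 3}
    (h : E3 a b + E3 a' b' + (E3 a a' + E3 b b') = 1) :
    (a = 0 ∨ b = 0 ∨ a' = 0 ∨ b' = 0) ∧ (a = 1 ∨ b = 1 ∨ a' = 1 ∨ b' = 1) ∧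
      (a = 2 ∨ b = 2 ∨ a' = 2 ∨ b' = 2) := by
  revert h
  fin_cases a <;> fin_cases b <;> fin_cases a' <;> fin_cases b' <;> decide

/-- Discrete Poincaré–Miranda / Sperner-type lemma on the `n × n` grid:
with suitable boundary colorings, some grid cell sees all three colors. -/
lemma discrete_miranda (n : ℕ) (c : ℕ → ℕ → Fin 3)
    (hleft : ∀ j ≤ n, c 0 j ≠ 1) (hright : ∀ j ≤ n, c n j = 1)
    (hbottom : ∀ i ≤ n, c i 0 ≠ 2) (htop : ∀ i ≤ n, c i n ≠ 0) :
    ∃ i < n, ∃ j < n,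
      (c i j = 0 ∨ c (i+1) j = 0 ∨ c i (j+1) = 0 ∨ c (i+1) (j+1) = 0) ∧
      (c i j = 1 ∨ c (i+1) j = 1 ∨ c i (j+1) = 1 ∨ c (i+1) (j+1) = 1) ∧
      (c i j = 2 ∨ c (i+1) j = 2 ∨ c i (j+1) = 2 ∨ c (i+1) (j+1) = 2) := by
  set H : ℕ → ℕ → ZMod 2 := fun i j => E3 (c i j) (c (i+1) j) with hH
  set V : ℕ → ℕ → ZMod 2 := fun i j => E3 (c i j) (c i (j+1)) with hV
  have key : (∑ i ∈ Finset.range n, ∑ j ∈ Finset.range n,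
      (H i j + H i (j+1) + (V i j + V (i+1) j))) = 1 := by
    have hsplit : (∑ i ∈ Finset.range n, ∑ j ∈ Finset.range n,
        (H i j + H i (j+1) + (V i j + V (i+1) j)))
        = (∑ i ∈ Finset.range n, ∑ j ∈ Finset.range n, (H i j + H i (j+1)))
          + (∑ i ∈ Finset.range n, ∑ j ∈ Finset.range n, (V i j + V (i+1) j)) := by
      rw [← Finset.sum_add_distrib]
      refine Finset.sum_congr rfl fun i _ => ?_
      rw [← Finset.sum_add_distrib]
    have hHsum : (∑ i ∈ Finset.range n, ∑ j ∈ Finset.range n, (H i j + H i (j+1)))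
        = ∑ i ∈ Finset.range n, (H i 0 + H i n) := by
      refine Finset.sum_congr rfl fun i _ => ?_
      rw [Finset.sum_add_distrib]
      exact zmod2_telescope (fun j => H i j) n
    have hVsum : (∑ i ∈ Finset.range n, ∑ j ∈ Finset.range n, (V i j + V (i+1) j))
        = ∑ j ∈ Finset.range n, (V 0 j + V n j) := by
      rw [Finset.sum_comm]
      refine Finset.sum_congr rfl fun j _ => ?_
      rw [Finset.sum_add_distrib]
      exact zmod2_telescope (fun i => V i j) n
    have hHn : ∀ i ∈ Finset.range n, H i n = 0 := by
      intro i hi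
      rw [Finset.mem_range] at hi
      exact E3_eq_zero_of_ne_zero (htop i (le_of_lt hi)) (htop (i+1) hi)
    have hV0 : ∀ j ∈ Finset.range n, V 0 j = 0 := by
      intro j hj
      rw [Finset.mem_range] at hj
      exact E3_eq_zero_of_ne_one (hleft j (le_of_lt hj)) (hleft (j+1) hj)
    have hVn : ∀ j ∈ Finset.range n, V n j = 0 := by
      intro j hj
      rw [Finset.mem_range] at hj
      have h1 := hright j (le_of_lt hj)
      have h2 := hright (j+1) hj
      simp only [hV, h1, h2]
      decide
    have hH0 : (∑ i ∈ Finset.range n, H i 0) = 1 := by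
      have hco : ∀ i ∈ Finset.range n, H i 0 = phi3 (c i 0) + phi3 (c (i+1) 0) := by
        intro i hi
        rw [Finset.mem_range] at hi
        exact E3_eq_phi3 (hbottom i (le_of_lt hi)) (hbottom (i+1) hi)
      rw [Finset.sum_congr rfl hco, Finset.sum_add_distrib,
        zmod2_telescope (fun i => phi3 (c i 0)) n]
      have hc00 : c 0 0 ≠ 1 := hleft 0 (Nat.zero_le n)
      have hcn0 : c n 0 = 1 := hright 0 (Nat.zero_le n)
      simp [phi3, hc00, hcn0]
    rw [hsplit, hHsum, hVsum]
    rw [Finset.sum_add_distrib, Finset.sum_add_distrib]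
    rw [Finset.sum_eq_zero hHn, Finset.sum_eq_zero hV0, Finset.sum_eq_zero hVn, hH0]
    decide
  have hex : ∃ i ∈ Finset.range n, ∃ j ∈ Finset.range n,
      (H i j + H i (j+1) + (V i j + V (i+1) j)) ≠ 0 := by
    by_contra hcon
    push_neg at hcon
    have : (∑ i ∈ Finset.range n, ∑ j ∈ Finset.range n,
        (H i j + H i (j+1) + (V i j + V (i+1) j))) = 0 :=
      Finset.sum_eq_zero fun i hi => Finset.sum_eq_zero fun j hj => hcon i hi j hj
    rw [this] at key
    exact one_ne_zero key.symm
  obtain ⟨i, hi, j, hj, hne⟩ := hex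
  rw [Finset.mem_range] at hi hj
  have hone : (H i j + H i (j+1) + (V i j + V (i+1) j)) = 1 := by
    have hall : ∀ x : ZMod 2, x ≠ 0 → x = 1 := by decide
    exact hall _ hne
  exact ⟨i, hi, j, hj, E3_cell hone⟩

/-- For compact disjoint nonempty sets, distances are uniformly bounded below. -/
lemma exists_pos_dist {Y : Type*} [MetricSpace Y] {A B : Set Y}
    (hA : IsCompact A) (hB : IsCompact B) (hAne : A.Nonempty) (hBne : B.Nonempty)
    (hdisj : Disjoint A B) : ∃ a > 0, ∀ p ∈ A, ∀ q ∈ B, a ≤ dist p q := by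
  obtain ⟨p₀, hp₀, hmin⟩ := hA.exists_isMinOn hAne
    ((continuous_infDist_pt B).continuousOn)
  refine ⟨infDist p₀ B, ?_, ?_⟩
  · show 0 < infDist p₀ B
    rw [← hB.isClosed.notMem_iff_infDist_pos hBne]
    exact fun hmem => (Set.disjoint_left.1 hdisj) hp₀ hmem
  · intro p hp q hq
    exact le_trans ((isMinOn_iff.1 hmin) p hp) (infDist_le_dist_of_mem hq)

/-- Poincaré–Miranda theorem on the unit square. -/
theorem miranda (f g : ℝ × ℝ → ℝ) (hf : Continuous f) (hg : Continuous g)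
    (hfl : ∀ t ∈ Set.Icc (0:ℝ) 1, f (0, t) < 0)
    (hfr : ∀ t ∈ Set.Icc (0:ℝ) 1, 0 < f (1, t))
    (hgb : ∀ t ∈ Set.Icc (0:ℝ) 1, g (t, 0) < 0)
    (hgt : ∀ t ∈ Set.Icc (0:ℝ) 1, 0 < g (t, 1)) :
    ∃ p ∈ Set.Icc (0:ℝ) 1 ×ˢ Set.Icc (0:ℝ) 1, f p = 0 ∧ g p = 0 := by
  set K : Set (ℝ × ℝ) := Set.Icc (0:ℝ) 1 ×ˢ Set.Icc (0:ℝ) 1 with hK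
  have hKcomp : IsCompact K := isCompact_Icc.prod isCompact_Icc
  have grid_mem : ∀ (N : ℕ), 0 < N → ∀ i ≤ N, ((i : ℝ) / N) ∈ Set.Icc (0:ℝ) 1 := by
    intro N hN i hi
    constructor
    · positivity
    · rw [div_le_one (by exact_mod_cast hN)]
      exact_mod_cast hi
  -- For each n, find three nearby points with the three colors
  have main : ∀ n : ℕ, ∃ P Q U : ℝ × ℝ, P ∈ K ∧
      f P ≤ 0 ∧ g P ≤ 0 ∧ 0 < f Q ∧ 0 < g U ∧
      dist Q P ≤ 1 / (n + 1) ∧ dist U P ≤ 1 / (n + 1) := by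
    intro n
    set N : ℕ := n + 1 with hNdef
    have hN : 0 < N := Nat.succ_pos n
    have hNR : (0:ℝ) < N := by exact_mod_cast hN
    set gp : ℕ → ℕ → ℝ × ℝ :=
      fun i j => ((min i N : ℕ) / (N : ℝ), (min j N : ℕ) / (N : ℝ)) with hgp
    set c : ℕ → ℕ → Fin 3 := fun i j =>
      if 0 < f (gp i j) then 1 else if 0 < g (gp i j) then 2 else 0 with hc
    have hgpN : ∀ j ≤ N, gp N j = (1, (j : ℝ) / N) := by
      intro j hj
      simp only [hgp, min_self, Nat.min_eq_left hj]
      rw [div_self hNR.ne']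
    have hgp0 : ∀ j ≤ N, gp 0 j = (0, (j : ℝ) / N) := by
      intro j hj
      simp only [hgp, Nat.min_eq_left (Nat.zero_le N), Nat.min_eq_left hj]
      norm_num
    have hgpB : ∀ i ≤ N, gp i 0 = ((i : ℝ) / N, 0) := by
      intro i hi
      simp only [hgp, Nat.min_eq_left hi, Nat.min_eq_left (Nat.zero_le N)]
      norm_num
    have hgpT : ∀ i ≤ N, gp i N = ((i : ℝ) / N, 1) := by
      intro i hi
      simp only [hgp, Nat.min_eq_left hi, min_self]
      rw [div_self hNR.ne']
    obtain ⟨i, hi, j, hj, h0, h1, h2⟩ := discrete_miranda N c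
      (by -- left side: color ≠ 1
        intro j hj
        simp only [hc, hgp0 j hj]
        rw [if_neg (not_lt.2 (le_of_lt (hfl _ (grid_mem N hN j hj))))]
        split_ifs <;> decide)
      (by -- right side: color = 1
        intro j hj
        simp only [hc, hgpN j hj]
        rw [if_pos (hfr _ (grid_mem N hN j hj))])
      (by -- bottom: color ≠ 2
        intro i hi
        simp only [hc, hgpB i hi]
        have hgneg := not_lt.2 (le_of_lt (hgb _ (grid_mem N hN i hi)))
        split_ifs <;> first | decide | exact absurd ‹0 < g _› hgneg)
      (by -- top: color ≠ 0
        intro i hi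
        simp only [hc, hgpT i hi]
        have hgpos := hgt _ (grid_mem N hN i hi)
        split_ifs <;> first | decide | exact absurd hgpos ‹¬ 0 < g _›)
    -- decode colors into concrete grid points
    have hcorner : ∀ (k : Fin 3),
        (c i j = k ∨ c (i+1) j = k ∨ c i (j+1) = k ∨ c (i+1) (j+1) = k) →
        ∃ i' j', i ≤ i' ∧ i' ≤ i + 1 ∧ j ≤ j' ∧ j' ≤ j + 1 ∧ c i' j' = k := by
      intro k h
      rcases h with h | h | h | h
      · exact ⟨i, j, le_rfl, Nat.le_succ i, le_rfl, Nat.le_succ j, h⟩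
      · exact ⟨i+1, j, Nat.le_succ i, le_rfl, le_rfl, Nat.le_succ j, h⟩
      · exact ⟨i, j+1, le_rfl, Nat.le_succ i, Nat.le_succ j, le_rfl, h⟩
      · exact ⟨i+1, j+1, Nat.le_succ i, le_rfl, Nat.le_succ j, le_rfl, h⟩
    obtain ⟨ip, jp, hip1, hip2, hjp1, hjp2, hcp⟩ := hcorner 0 h0
    obtain ⟨iq, jq, hiq1, hiq2, hjq1, hjq2, hcq⟩ := hcorner 1 h1
    obtain ⟨iu, ju, hiu1, hiu2, hju1, hju2, hcu⟩ := hcorner 2 h2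
    -- distances between corners
    have coord_dist : ∀ m m' : ℕ, i ≤ m → m ≤ i + 1 → i ≤ m' → m' ≤ i + 1 →
        dist ((min m N : ℕ) / (N : ℝ)) ((min m' N : ℕ) / (N : ℝ)) ≤ 1 / N := by
      intro m m' h1' h2' h3' h4'
      have e1 : min m N = m := Nat.min_eq_left (by omega)
      have e2 : min m' N = m' := Nat.min_eq_left (by omega)
      rw [e1, e2, Real.dist_eq, div_sub_div_same, abs_div, abs_of_pos hNR,
        div_le_div_iff₀ hNR hNR]
      have hb1 : (m : ℝ) ≤ (i : ℝ) + 1 := by exact_mod_cast h2'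
      have hb2 : (i : ℝ) ≤ (m : ℝ) := by exact_mod_cast h1'
      have hb3 : (m' : ℝ) ≤ (i : ℝ) + 1 := by exact_mod_cast h4'
      have hb4 : (i : ℝ) ≤ (m' : ℝ) := by exact_mod_cast h3'
      have : |(m : ℝ) - (m' : ℝ)| ≤ 1 := abs_le.2 ⟨by linarith, by linarith⟩
      nlinarith [this]
    have coord_dist' : ∀ m m' : ℕ, j ≤ m → m ≤ j + 1 → j ≤ m' → m' ≤ j + 1 →
        dist ((min m N : ℕ) / (N : ℝ)) ((min m' N : ℕ) / (N : ℝ)) ≤ 1 / N := by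
      intro m m' h1' h2' h3' h4'
      have e1 : min m N = m := Nat.min_eq_left (by omega)
      have e2 : min m' N = m' := Nat.min_eq_left (by omega)
      rw [e1, e2, Real.dist_eq, div_sub_div_same, abs_div, abs_of_pos hNR,
        div_le_div_iff₀ hNR hNR]
      have hb1 : (m : ℝ) ≤ (j : ℝ) + 1 := by exact_mod_cast h2'
      have hb2 : (j : ℝ) ≤ (m : ℝ) := by exact_mod_cast h1'
      have hb3 : (m' : ℝ) ≤ (j : ℝ) + 1 := by exact_mod_cast h4'
      have hb4 : (j : ℝ) ≤ (m' : ℝ) := by exact_mod_cast h3'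
      have : |(m : ℝ) - (m' : ℝ)| ≤ 1 := abs_le.2 ⟨by linarith, by linarith⟩
      nlinarith [this]
    have cell_dist : ∀ i' j' i'' j'', i ≤ i' → i' ≤ i + 1 → i ≤ i'' → i'' ≤ i + 1 →
        j ≤ j' → j' ≤ j + 1 → j ≤ j'' → j'' ≤ j + 1 →
        dist (gp i' j') (gp i'' j'') ≤ 1 / (N : ℝ) := by
      intro i' j' i'' j'' a1 a2 a3 a4 a5 a6 a7 a8
      rw [Prod.dist_eq]
      exact max_le (coord_dist i' i'' a1 a2 a3 a4) (coord_dist' j' j'' a5 a6 a7 a8)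
    have gp_memK : ∀ i' j', gp i' j' ∈ K := by
      intro i' j'
      exact ⟨grid_mem N hN _ (min_le_right _ _), grid_mem N hN _ (min_le_right _ _)⟩
    -- decode the color values
    have hfP : f (gp ip jp) ≤ 0 ∧ g (gp ip jp) ≤ 0 := by
      by_contra hcon
      rw [hc] at hcp
      simp only at hcp
      split_ifs at hcp with hh1 hh2
      · exact absurd hcp (by decide)
      · exact absurd hcp (by decide)
      · exact hcon ⟨not_lt.1 hh1, not_lt.1 hh2⟩
    have hfQ : 0 < f (gp iq jq) := by
      rw [hc] at hcq
      simp only at hcq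
      split_ifs at hcq with hh1 hh2
      · exact hh1
      · exact absurd hcq (by decide)
      · exact absurd hcq (by decide)
    have hgU : 0 < g (gp iu ju) := by
      rw [hc] at hcu
      simp only at hcu
      split_ifs at hcu with hh1 hh2
      · exact absurd hcu (by decide)
      · exact hh2
      · exact absurd hcu (by decide)
    refine ⟨gp ip jp, gp iq jq, gp iu ju, gp_memK _ _, hfP.1, hfP.2, hfQ, hgU, ?_, ?_⟩
    · have := cell_dist iq jq ip jp hiq1 hiq2 hip1 hip2 hjq1 hjq2 hjp1 hjp2
      exact_mod_cast this
    · have := cell_dist iu ju ip jp hiu1 hiu2 hip1 hip2 hju1 hju2 hjp1 hjp2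
      exact_mod_cast this
  -- choose the points and pass to a convergent subsequence
  choose P Q U hPK hfP hgP hfQ hgU hdQ hdU using main
  obtain ⟨z, hzK, φ, hφ, hconv⟩ := hKcomp.tendsto_subseq hPK
  have hlim0 : Filter.Tendsto (fun n : ℕ => 1 / ((φ n : ℝ) + 1)) Filter.atTop (nhds 0) := by
    exact (tendsto_one_div_add_atTop_nhds_zero_nat).comp hφ.tendsto_atTop
  have hQconv : Filter.Tendsto (Q ∘ φ) Filter.atTop (nhds z) := by
    rw [tendsto_iff_dist_tendsto_zero]
    apply squeeze_zero (fun n => dist_nonneg)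
      (g := fun n => 1 / ((φ n : ℝ) + 1) + dist (P (φ n)) z)
    · intro n
      calc dist (Q (φ n)) z ≤ dist (Q (φ n)) (P (φ n)) + dist (P (φ n)) z := dist_triangle _ _ _
        _ ≤ 1 / ((φ n : ℝ) + 1) + dist (P (φ n)) z := by
            have := hdQ (φ n); push_cast at this ⊢; linarith
    · have hPd : Filter.Tendsto (fun n => dist (P (φ n)) z) Filter.atTop (nhds 0) :=
        tendsto_iff_dist_tendsto_zero.1 hconv
      simpa using hlim0.add hPd
  have hUconv : Filter.Tendsto (U ∘ φ) Filter.atTop (nhds z) := by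
    rw [tendsto_iff_dist_tendsto_zero]
    apply squeeze_zero (fun n => dist_nonneg)
      (g := fun n => 1 / ((φ n : ℝ) + 1) + dist (P (φ n)) z)
    · intro n
      calc dist (U (φ n)) z ≤ dist (U (φ n)) (P (φ n)) + dist (P (φ n)) z := dist_triangle _ _ _
        _ ≤ 1 / ((φ n : ℝ) + 1) + dist (P (φ n)) z := by
            have := hdU (φ n); push_cast at this ⊢; linarith
    · have hPd : Filter.Tendsto (fun n => dist (P (φ n)) z) Filter.atTop (nhds 0) :=
        tendsto_iff_dist_tendsto_zero.1 hconv
      simpa using hlim0.add hPd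
  have hfz_le : f z ≤ 0 :=
    le_of_tendsto ((hf.continuousAt.tendsto).comp hconv)
      (Filter.Eventually.of_forall fun n => hfP (φ n))
  have hfz_ge : 0 ≤ f z :=
    ge_of_tendsto ((hf.continuousAt.tendsto).comp hQconv)
      (Filter.Eventually.of_forall fun n => le_of_lt (hfQ (φ n)))
  have hgz_le : g z ≤ 0 :=
    le_of_tendsto ((hg.continuousAt.tendsto).comp hconv)
      (Filter.Eventually.of_forall fun n => hgP (φ n))
  have hgz_ge : 0 ≤ g z :=
    ge_of_tendsto ((hg.continuousAt.tendsto).comp hUconv)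
      (Filter.Eventually.of_forall fun n => le_of_lt (hgU (φ n)))
  exact ⟨z, hzK, le_antisymm hfz_le hfz_ge, le_antisymm hgz_le hgz_ge⟩

end Stmt2Aux

/-- If a metric space `X` is homeomorphic to `ℝ²` and its Hausdorff 2-measure is finite on
compact sets, then every ball in `X` has positive Hausdorff 2-measure. -/
theorem stmt2 {X : Type*} [MetricSpace X] [MeasurableSpace X] [BorelSpace X]
    (hhomeo : Nonempty (X ≃ₜ EuclideanSpace ℝ (Fin 2)))
    (hfin : ∀ K : Set X, IsCompact K → (μH[2] : Measure X) K < ⊤)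
    (x : X) (r : ℝ) (hr : 0 < r) :
    0 < (μH[2] : Measure X) (Metric.ball x r) := by
  obtain ⟨h⟩ := hhomeo
  set H : X ≃ₜ ℝ × ℝ :=
    h.trans (((EuclideanSpace.equiv (Fin 2) ℝ).toHomeomorph).trans
      (Homeomorph.piFinTwo fun _ => ℝ)) with hHdef
  set e : ℝ × ℝ := H x with he
  have hcont : ContinuousAt H.symm e := H.symm.continuous.continuousAt
  rw [Metric.continuousAt_iff] at hcont
  obtain ⟨δ, hδpos, hδ⟩ := hcont r hr
  have hsymm_e : H.symm e = x := H.symm_apply_apply x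
  set s : ℝ := δ / 2 with hs
  have hspos : 0 < s := by positivity
  set Q' : Set (ℝ × ℝ) := Set.Icc (e.1 - s) (e.1 + s) ×ˢ Set.Icc (e.2 - s) (e.2 + s) with hQ'
  set L : Set X := H.symm '' (({e.1 - s} : Set ℝ) ×ˢ Set.Icc (e.2 - s) (e.2 + s)) with hL
  set R : Set X := H.symm '' (({e.1 + s} : Set ℝ) ×ˢ Set.Icc (e.2 - s) (e.2 + s)) with hR
  set Bo : Set X := H.symm '' (Set.Icc (e.1 - s) (e.1 + s) ×ˢ ({e.2 - s} : Set ℝ)) with hBo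
  set T : Set X := H.symm '' (Set.Icc (e.1 - s) (e.1 + s) ×ˢ ({e.2 + s} : Set ℝ)) with hT
  set K : Set X := H.symm '' Q' with hKdef
  have hLcomp : IsCompact L := (isCompact_singleton.prod isCompact_Icc).image H.symm.continuous
  have hRcomp : IsCompact R := (isCompact_singleton.prod isCompact_Icc).image H.symm.continuous
  have hBocomp : IsCompact Bo := (isCompact_Icc.prod isCompact_singleton).image H.symm.continuous
  have hTcomp : IsCompact T := (isCompact_Icc.prod isCompact_singleton).image H.symm.continuous
  have hmemIcc1 : e.1 - s ∈ Set.Icc (e.1 - s) (e.1 + s) := ⟨le_rfl, by linarith⟩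
  have hmemIcc2 : e.2 - s ∈ Set.Icc (e.2 - s) (e.2 + s) := ⟨le_rfl, by linarith⟩
  have hLne : L.Nonempty := ⟨H.symm (e.1 - s, e.2 - s),
    Set.mem_image_of_mem _ ⟨rfl, hmemIcc2⟩⟩
  have hRne : R.Nonempty := ⟨H.symm (e.1 + s, e.2 - s),
    Set.mem_image_of_mem _ ⟨rfl, hmemIcc2⟩⟩
  have hBone : Bo.Nonempty := ⟨H.symm (e.1 - s, e.2 - s),
    Set.mem_image_of_mem _ ⟨hmemIcc1, rfl⟩⟩
  have hTne : T.Nonempty := ⟨H.symm (e.1 - s, e.2 + s),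
    Set.mem_image_of_mem _ ⟨hmemIcc1, rfl⟩⟩
  have hLRdisj : Disjoint L R := by
    rw [Set.disjoint_left]
    rintro _ ⟨w, hw, rfl⟩ ⟨w', hw', heq⟩
    have hww' : w' = w := H.symm.injective heq
    have h1 : w.1 = e.1 - s := hw.1
    have h2 : w'.1 = e.1 + s := hw'.1
    rw [hww'] at h2
    linarith [h1 ▸ h2]
  have hBTdisj : Disjoint Bo T := by
    rw [Set.disjoint_left]
    rintro _ ⟨w, hw, rfl⟩ ⟨w', hw', heq⟩
    have hww' : w' = w := H.symm.injective heq
    have h1 : w.2 = e.2 - s := hw.2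
    have h2 : w'.2 = e.2 + s := hw'.2
    rw [hww'] at h2
    linarith [h1 ▸ h2]
  obtain ⟨a, hapos, haLR⟩ := Stmt2Aux.exists_pos_dist hLcomp hRcomp hLne hRne hLRdisj
  obtain ⟨b, hbpos, hbBT⟩ := Stmt2Aux.exists_pos_dist hBocomp hTcomp hBone hTne hBTdisj
  -- surjectivity onto a rectangle via Miranda
  have hsurj : ∀ u v : ℝ, 0 < u → u < a → 0 < v → v < b →
      ∃ p ∈ K, infDist p L = u ∧ infDist p Bo = v := by
    intro u v hu hua hv hvb
    set q : ℝ × ℝ → ℝ × ℝ := fun w => (e.1 + s * (2 * w.1 - 1), e.2 + s * (2 * w.2 - 1))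
      with hqdef
    have hqcont : Continuous q := by
      apply Continuous.prodMk
      · exact continuous_const.add (continuous_const.mul
          ((continuous_const.mul continuous_fst).sub continuous_const))
      · exact continuous_const.add (continuous_const.mul
          ((continuous_const.mul continuous_snd).sub continuous_const))
    have hfc : Continuous fun w => infDist (H.symm (q w)) L - u :=
      ((continuous_infDist_pt L).comp (H.symm.continuous.comp hqcont)).sub continuous_const
    have hgc : Continuous fun w => infDist (H.symm (q w)) Bo - v :=
      ((continuous_infDist_pt Bo).comp (H.symm.continuous.comp hqcont)).sub continuous_const
    have hIccmem : ∀ t ∈ Set.Icc (0:ℝ) 1, e.2 + s * (2 * t - 1) ∈ Set.Icc (e.2 - s) (e.2 + s) := by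
      intro t ⟨ht1, ht2⟩
      constructor <;> nlinarith
    have hIccmem' : ∀ t ∈ Set.Icc (0:ℝ) 1, e.1 + s * (2 * t - 1) ∈ Set.Icc (e.1 - s) (e.1 + s) := by
      intro t ⟨ht1, ht2⟩
      constructor <;> nlinarith
    have hRge : ∀ p ∈ R, a ≤ infDist p L := by
      intro p hp
      by_contra hlt
      push_neg at hlt
      rw [infDist_lt_iff hLne] at hlt
      obtain ⟨y, hy, hdy⟩ := hlt
      have := haLR y hy p hp
      rw [dist_comm] at this
      linarith
    have hTge : ∀ p ∈ T, b ≤ infDist p Bo := by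
      intro p hp
      by_contra hlt
      push_neg at hlt
      rw [infDist_lt_iff hBone] at hlt
      obtain ⟨y, hy, hdy⟩ := hlt
      have := hbBT y hy p hp
      rw [dist_comm] at this
      linarith
    obtain ⟨p, hpmem, hfzero, hgzero⟩ := Stmt2Aux.miranda
      (fun w => infDist (H.symm (q w)) L - u) (fun w => infDist (H.symm (q w)) Bo - v)
      hfc hgc
      (by -- left: in L, infDist = 0
        intro t ht
        have hmem : H.symm (q (0, t)) ∈ L := by
          apply Set.mem_image_of_mem
          refine ⟨?_, hIccmem t ht⟩
          show e.1 + s * (2 * 0 - 1) ∈ ({e.1 - s} : Set ℝ)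
          rw [Set.mem_singleton_iff]; ring
        rw [infDist_zero_of_mem hmem]
        linarith)
      (by -- right: in R, infDist ≥ a
        intro t ht
        have hmem : H.symm (q (1, t)) ∈ R := by
          apply Set.mem_image_of_mem
          refine ⟨?_, hIccmem t ht⟩
          show e.1 + s * (2 * 1 - 1) ∈ ({e.1 + s} : Set ℝ)
          rw [Set.mem_singleton_iff]; ring
        have := hRge _ hmem
        linarith)
      (by -- bottom: in Bo
        intro t ht
        have hmem : H.symm (q (t, 0)) ∈ Bo := by
          apply Set.mem_image_of_mem
          refine ⟨hIccmem' t ht, ?_⟩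
          show e.2 + s * (2 * 0 - 1) ∈ ({e.2 - s} : Set ℝ)
          rw [Set.mem_singleton_iff]; ring
        rw [infDist_zero_of_mem hmem]
        linarith)
      (by -- top: in T
        intro t ht
        have hmem : H.symm (q (t, 1)) ∈ T := by
          apply Set.mem_image_of_mem
          refine ⟨hIccmem' t ht, ?_⟩
          show e.2 + s * (2 * 1 - 1) ∈ ({e.2 + s} : Set ℝ)
          rw [Set.mem_singleton_iff]; ring
        have := hTge _ hmem
        linarith)
    refine ⟨H.symm (q p), Set.mem_image_of_mem _ ⟨hIccmem' p.1 ⟨hpmem.1.1, hpmem.1.2⟩,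
      hIccmem p.2 ⟨hpmem.2.1, hpmem.2.2⟩⟩, sub_eq_zero.1 hfzero, sub_eq_zero.1 hgzero⟩
  set Φ : X → ℝ × ℝ := fun p => (infDist p L, infDist p Bo) with hΦdef
  have hΦlip : LipschitzWith 1 Φ := by
    have := (lipschitz_infDist_pt L).prodMk (lipschitz_infDist_pt Bo)
    simpa using this
  have himg : Set.Ioo 0 a ×ˢ Set.Ioo 0 b ⊆ Φ '' K := by
    rintro ⟨u, v⟩ ⟨⟨hu1, hu2⟩, hv1, hv2⟩
    obtain ⟨p, hpK, h1, h2⟩ := hsurj u v hu1 hu2 hv1 hv2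
    exact ⟨p, hpK, by rw [hΦdef]; simp only; rw [h1, h2]⟩
  have hKball : K ⊆ Metric.ball x r := by
    rintro _ ⟨w, hw, rfl⟩
    have hd1 : dist w.1 e.1 ≤ s := by
      rw [Real.dist_eq, abs_le]
      exact ⟨by linarith [hw.1.1], by linarith [hw.1.2]⟩
    have hd2 : dist w.2 e.2 ≤ s := by
      rw [Real.dist_eq, abs_le]
      exact ⟨by linarith [hw.2.1], by linarith [hw.2.2]⟩
    have hdist : dist w e < δ := by
      rw [Prod.dist_eq]
      have : s < δ := by rw [hs]; linarith
      exact lt_of_le_of_lt (max_le hd1 hd2) this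
    have := hδ hdist
    rw [hsymm_e] at this
    exact Metric.mem_ball.2 this
  have h1 : (0:ℝ≥0∞) < μH[2] (Set.Ioo (0:ℝ) a ×ˢ Set.Ioo (0:ℝ) b) := by
    rw [MeasureTheory.hausdorffMeasure_prod_real, Measure.volume_eq_prod, Measure.prod_prod,
      Real.volume_Ioo, Real.volume_Ioo]
    exact ENNReal.mul_pos (ENNReal.ofReal_pos.2 (by linarith)).ne'
      (ENNReal.ofReal_pos.2 (by linarith)).ne'
  have h2 : μH[2] (Set.Ioo (0:ℝ) a ×ˢ Set.Ioo (0:ℝ) b) ≤ μH[2] (Φ '' K) :=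
    measure_mono himg
  have h3 : μH[2] (Φ '' K) ≤ μH[2] K := by
    have := hΦlip.hausdorffMeasure_image_le (by norm_num : (0:ℝ) ≤ 2) K
    simpa using this
  have h4 : μH[2] K ≤ μH[2] (Metric.ball x r) := measure_mono hKball
  exact lt_of_lt_of_le h1 (le_trans h2 (le_trans h3 h4))
end

section
/- Let X be a metric space with Hausdorff 2-measure ℋ², let A ⊂ X be Borel, let m : X → ℝ be L-Lipschitz, and let g : A → [0,∞] be Borel measurable. Then ∫_ℝ ∫_{A ∩ m⁻¹(t)} g dℋ¹ dt ≤ (4L/π) ∫_A g dℋ². -/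
open MeasureTheory Set Filter EMetric
open scoped ENNReal NNReal Topology

namespace CoareaAux

variable {X : Type*} [MetricSpace X] [MeasurableSpace X] [BorelSpace X]
variable {m : X → ℝ} {L : ℝ≥0}

/-- Core Eilenberg-type bound for sets, with an explicit measurable majorant. -/
lemma slice_bound (hm : LipschitzWith L m) (s : Set X) {ε : ℝ≥0∞} (hε : 0 < ε) :
    ∃ h : ℝ → ℝ≥0∞, Measurable h ∧ (∀ t : ℝ, μH[1] (s ∩ m ⁻¹' {t}) ≤ h t) ∧
      ∫⁻ t, h t ≤ (L : ℝ≥0∞) * μH[2] s + ε := by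
  rcases eq_or_ne L 0 with hL | hL
  · -- degenerate case : `m` is constant
    by_cases hX : Nonempty X
    · obtain ⟨x₀⟩ := hX
      have hconst : ∀ x, m x = m x₀ := by
        intro x
        have := hm.dist_le_mul x x₀
        rw [hL] at this
        simpa [dist_le_zero] using this
      refine ⟨({m x₀} : Set ℝ).indicator (fun _ => (∞ : ℝ≥0∞)), ?_, ?_, ?_⟩
      · exact measurable_const.indicator (measurableSet_singleton _)
      · intro t
        by_cases ht : t = m x₀
        · simp [ht]
        · have : m ⁻¹' {t} = ∅ := by
            ext x; simp [hconst x, Ne.symm ht]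
          simp [this]
      · rw [lintegral_indicator (measurableSet_singleton _) _]
        simp
    · have : IsEmpty X := not_nonempty_iff.1 hX
      have hempty : ∀ u : Set X, u = ∅ := fun u => eq_empty_of_isEmpty u
      refine ⟨0, measurable_const, ?_, ?_⟩
      · intro t; simp [hempty (s ∩ m ⁻¹' {t})]
      · simp
  rcases eq_or_ne (μH[2] s) ∞ with hs | hs
  · refine ⟨fun _ => ∞, measurable_const, fun t => le_top, ?_⟩
    have : (L : ℝ≥0∞) * μH[2] s = ∞ := by
      rw [hs]; exact ENNReal.mul_top (by exact_mod_cast hL)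
    simp [this]
  -- main case
  have hLtop : (L : ℝ≥0∞) ≠ ∞ := ENNReal.coe_ne_top
  set ε' : ℝ≥0∞ := ε / L with hε'def
  have hε' : ε' ≠ 0 := by
    simp [hε'def, ENNReal.div_eq_zero_iff, hε.ne', hLtop]
  -- for each `k`, choose a covering of `s` by sets of diameter `≤ k⁻¹`
  have H : ∀ k : ℕ, ∃ E : ℕ → Set X, (s ⊆ ⋃ n, E n) ∧
      (∀ n, diam (E n) ≤ ((k : ℝ≥0∞))⁻¹) ∧
      ∑' n, diam (E n) ^ (2 : ℝ) < μH[2] s + ε' := by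
    intro k
    have h1 : (⨅ (t : ℕ → Set X) (_ : s ⊆ ⋃ n, t n) (_ : ∀ n, diam (t n) ≤ ((k : ℝ≥0∞))⁻¹),
        ∑' n, ⨆ _ : (t n).Nonempty, diam (t n) ^ (2 : ℝ)) ≤ μH[2] s := by
      rw [Measure.hausdorffMeasure_apply]
      exact le_iSup₂ (f := fun (r : ℝ≥0∞) (_ : 0 < r) =>
        ⨅ (t : ℕ → Set X) (_ : s ⊆ ⋃ n, t n) (_ : ∀ n, diam (t n) ≤ r),
          ∑' n, ⨆ _ : (t n).Nonempty, diam (t n) ^ (2 : ℝ)) ((k : ℝ≥0∞))⁻¹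
        (ENNReal.inv_pos.2 (ENNReal.natCast_ne_top k))
    have h2 := h1.trans_lt (ENNReal.lt_add_right hs hε')
    simp only [iInf_lt_iff] at h2
    obtain ⟨E, hcov, hdiam, hsum⟩ := h2
    refine ⟨E, hcov, hdiam, ?_⟩
    refine lt_of_le_of_lt (le_of_eq ?_) hsum
    refine tsum_congr fun n => ?_
    rcases (E n).eq_empty_or_nonempty with he | he
    · simp [he, show EMetric.diam (∅ : Set X) = 0 from Metric.ediam_empty, ENNReal.zero_rpow_of_pos (by norm_num : (0:ℝ) < 2)]
    · simp [he]
  choose E hcov hdiam hsum using H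
  -- the majorants
  set J : ℕ → ℕ → Set ℝ := fun k n => closure (m '' E k n) with hJ
  set hk : ℕ → ℝ → ℝ≥0∞ := fun k t => ∑' n, diam (E k n) * (J k n).indicator 1 t with hhk
  have hkmeas : ∀ k, Measurable (hk k) := by
    intro k
    exact Measurable.ennreal_tsum fun n =>
      (measurable_one.indicator isClosed_closure.measurableSet).const_mul _
  refine ⟨fun t => liminf (fun k => hk k t) atTop, Measurable.liminf hkmeas, ?_, ?_⟩
  · intro t
    have hbound : μH[1] (s ∩ m ⁻¹' {t}) ≤
        liminf (fun k => ∑' n, diam (E k n ∩ m ⁻¹' {t}) ^ (1 : ℝ)) atTop := by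
      refine Measure.hausdorffMeasure_le_liminf_tsum 1 _ (fun k : ℕ => ((k : ℝ≥0∞))⁻¹)
        ENNReal.tendsto_inv_nat_nhds_zero (fun k n => E k n ∩ m ⁻¹' {t}) ?_ ?_
      · exact Eventually.of_forall fun k n =>
          (diam_mono inter_subset_left).trans (hdiam k n)
      · exact Eventually.of_forall fun k x hx =>
          mem_iUnion.2 (by
            rcases mem_iUnion.1 (hcov k hx.1) with ⟨n, hn⟩
            exact ⟨n, hn, hx.2⟩)
    refine hbound.trans (liminf_le_liminf (Eventually.of_forall fun k => ?_))
    refine ENNReal.tsum_le_tsum fun n => ?_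
    rcases (E k n ∩ m ⁻¹' {t}).eq_empty_or_nonempty with he | he
    · simp [he, show EMetric.diam (∅ : Set X) = 0 from Metric.ediam_empty, ENNReal.zero_rpow_of_pos (by norm_num : (0:ℝ) < 1)]
    · obtain ⟨x, hxE, hxm⟩ := he
      have ht : t ∈ J k n := subset_closure ⟨x, hxE, hxm⟩
      rw [ENNReal.rpow_one]
      calc diam (E k n ∩ m ⁻¹' {t}) ≤ diam (E k n) := diam_mono inter_subset_left
        _ = diam (E k n) * (J k n).indicator 1 t := by
            simp [Set.indicator_of_mem ht]
  · -- integral bound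
    have hint : ∀ k, ∫⁻ t, hk k t ≤ (L : ℝ≥0∞) * μH[2] s + ε := by
      intro k
      have h1 : ∫⁻ t, hk k t = ∑' n, diam (E k n) * volume (J k n) := by
        rw [lintegral_tsum fun n =>
          ((measurable_one.indicator isClosed_closure.measurableSet).const_mul _).aemeasurable]
        refine tsum_congr fun n => ?_
        rw [lintegral_const_mul _ (measurable_one.indicator isClosed_closure.measurableSet),
          lintegral_indicator isClosed_closure.measurableSet _]
        simp [hJ]
      have h2 : ∀ n, diam (E k n) * volume (J k n) ≤
          (L : ℝ≥0∞) * diam (E k n) ^ (2 : ℝ) := by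
        intro n
        have hv : volume (J k n) ≤ (L : ℝ≥0∞) * diam (E k n) :=
          (Real.volume_le_diam _).trans
            ((diam_closure _).le.trans (hm.ediam_image_le _))
        calc diam (E k n) * volume (J k n) ≤ diam (E k n) * ((L : ℝ≥0∞) * diam (E k n)) :=
              mul_le_mul_right hv _
          _ = (L : ℝ≥0∞) * diam (E k n) ^ (2 : ℝ) := by
              rw [show ((2:ℝ)) = ((2:ℕ):ℝ) by norm_num, ENNReal.rpow_natCast]
              ring
      calc ∫⁻ t, hk k t = ∑' n, diam (E k n) * volume (J k n) := h1
        _ ≤ ∑' n, (L : ℝ≥0∞) * diam (E k n) ^ (2 : ℝ) := ENNReal.tsum_le_tsum h2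
        _ = (L : ℝ≥0∞) * ∑' n, diam (E k n) ^ (2 : ℝ) := ENNReal.tsum_mul_left
        _ ≤ (L : ℝ≥0∞) * (μH[2] s + ε') := mul_le_mul_right (hsum k).le _
        _ = (L : ℝ≥0∞) * μH[2] s + (L : ℝ≥0∞) * (ε / L) := by rw [mul_add]
        _ ≤ (L : ℝ≥0∞) * μH[2] s + ε := add_le_add_right ENNReal.mul_div_le _
    calc ∫⁻ t, liminf (fun k => hk k t) atTop ≤ liminf (fun k => ∫⁻ t, hk k t) atTop :=
          lintegral_liminf_le hkmeas
      _ ≤ (L : ℝ≥0∞) * μH[2] s + ε := by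
          refine (liminf_le_liminf (Eventually.of_forall hint)).trans ?_
          simp [liminf_const]

variable (m L) in
/-- The inductive predicate: measurable-majorant form of the coarea inequality. -/
def P (A : Set X) (g : X → ℝ≥0∞) : Prop :=
  ∀ ε : ℝ≥0∞, 0 < ε → ∃ h : ℝ → ℝ≥0∞, Measurable h ∧
    (∀ t : ℝ, ∫⁻ x in A ∩ m ⁻¹' {t}, g x ∂(μH[1] : Measure X) ≤ h t) ∧
    ∫⁻ t, h t ≤ (L : ℝ≥0∞) * (∫⁻ x in A, g x ∂(μH[2] : Measure X)) + ε

lemma P_indicator (hm : LipschitzWith L m) (A : Set X) (c : ℝ≥0)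
    {S : Set X} (hS : MeasurableSet S) :
    P m L A (S.indicator fun _ => (c : ℝ≥0∞)) := by
  intro ε hε
  rcases eq_or_ne c 0 with hc | hc
  · refine ⟨0, measurable_const, ?_, ?_⟩
    · intro t; simp [hc]
    · simp
  have hc'' : (c : ℝ≥0∞) ≠ ∞ := ENNReal.coe_ne_top
  obtain ⟨h, hmeas, hle, hint⟩ := slice_bound hm (A ∩ S)
    (ε := ε / c) (ENNReal.div_pos hε.ne' hc'')
  refine ⟨fun t => (c : ℝ≥0∞) * h t, hmeas.const_mul _, ?_, ?_⟩
  · intro t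
    rw [lintegral_indicator_const hS, Measure.restrict_apply hS]
    have hset : S ∩ (A ∩ m ⁻¹' {t}) = (A ∩ S) ∩ m ⁻¹' {t} := by
      ext x
      simp only [mem_inter_iff, mem_preimage]
      tauto
    rw [hset]
    exact mul_le_mul_right (hle t) _
  · have h3 : ∫⁻ x in A, (S.indicator fun _ => (c : ℝ≥0∞)) x ∂(μH[2] : Measure X)
        = (c : ℝ≥0∞) * μH[2] (A ∩ S) := by
      rw [lintegral_indicator_const hS, Measure.restrict_apply hS, inter_comm]
    rw [lintegral_const_mul _ hmeas, h3]
    calc (c : ℝ≥0∞) * ∫⁻ t, h t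
        ≤ (c : ℝ≥0∞) * ((L : ℝ≥0∞) * μH[2] (A ∩ S) + ε / c) := mul_le_mul_right hint _
      _ = (L : ℝ≥0∞) * ((c : ℝ≥0∞) * μH[2] (A ∩ S)) + (c : ℝ≥0∞) * (ε / c) := by
          rw [mul_add]; ring_nf
      _ ≤ (L : ℝ≥0∞) * ((c : ℝ≥0∞) * μH[2] (A ∩ S)) + ε :=
          add_le_add_right ENNReal.mul_div_le _

lemma P_add {A : Set X} {g₁ g₂ : X → ℝ≥0∞} (hg₁ : Measurable g₁)
    (h₁ : P m L A g₁) (h₂ : P m L A g₂) : P m L A (g₁ + g₂) := by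
  intro ε hε
  obtain ⟨h₁', hm₁, hle₁, hint₁⟩ := h₁ (ε / 2) (ENNReal.half_pos hε.ne')
  obtain ⟨h₂', hm₂, hle₂, hint₂⟩ := h₂ (ε / 2) (ENNReal.half_pos hε.ne')
  refine ⟨h₁' + h₂', hm₁.add hm₂, ?_, ?_⟩
  · intro t
    have hadd : ∫⁻ x in A ∩ m ⁻¹' {t}, (g₁ + g₂) x ∂(μH[1] : Measure X)
        = (∫⁻ x in A ∩ m ⁻¹' {t}, g₁ x ∂(μH[1] : Measure X))
          + ∫⁻ x in A ∩ m ⁻¹' {t}, g₂ x ∂(μH[1] : Measure X) := by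
      simp only [Pi.add_apply]
      exact lintegral_add_left hg₁ _
    rw [hadd]
    exact add_le_add (hle₁ t) (hle₂ t)
  · have hadd : ∫⁻ x in A, (g₁ + g₂) x ∂(μH[2] : Measure X)
        = (∫⁻ x in A, g₁ x ∂(μH[2] : Measure X)) + ∫⁻ x in A, g₂ x ∂(μH[2] : Measure X) := by
      simp only [Pi.add_apply]
      exact lintegral_add_left hg₁ _
    calc ∫⁻ t, (h₁' + h₂') t = (∫⁻ t, h₁' t) + ∫⁻ t, h₂' t := by
          simp only [Pi.add_apply]
          exact lintegral_add_left hm₁ _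
      _ ≤ ((L : ℝ≥0∞) * (∫⁻ x in A, g₁ x ∂(μH[2] : Measure X)) + ε / 2)
          + ((L : ℝ≥0∞) * (∫⁻ x in A, g₂ x ∂(μH[2] : Measure X)) + ε / 2) :=
          add_le_add hint₁ hint₂
      _ = (L : ℝ≥0∞) * (∫⁻ x in A, (g₁ + g₂) x ∂(μH[2] : Measure X)) + ε := by
          rw [hadd, mul_add]
          rw [add_add_add_comm, ENNReal.add_halves]
      _ ≤ _ := le_rfl

lemma P_tsum {A : Set X} {g : ℕ → X → ℝ≥0∞} (hgm : ∀ n, Measurable (g n))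
    (hP : ∀ n, P m L A (g n)) : P m L A (fun x => ∑' n, g n x) := by
  intro ε hε
  obtain ⟨ε', hε'pos, hε'sum⟩ := ENNReal.exists_pos_sum_of_countable hε.ne' ℕ
  choose h hmeas hle hint using fun n => hP n (ε' n) (by exact_mod_cast hε'pos n)
  refine ⟨fun t => ∑' n, h n t, Measurable.ennreal_tsum hmeas, ?_, ?_⟩
  · intro t
    rw [lintegral_tsum fun n => (hgm n).aemeasurable]
    exact ENNReal.tsum_le_tsum fun n => hle n t
  · calc ∫⁻ t, ∑' n, h n t = ∑' n, ∫⁻ t, h n t :=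
          lintegral_tsum fun n => (hmeas n).aemeasurable
      _ ≤ ∑' n, ((L : ℝ≥0∞) * (∫⁻ x in A, g n x ∂(μH[2] : Measure X)) + (ε' n : ℝ≥0∞)) :=
          ENNReal.tsum_le_tsum hint
      _ = (L : ℝ≥0∞) * (∑' n, ∫⁻ x in A, g n x ∂(μH[2] : Measure X)) + ∑' n, (ε' n : ℝ≥0∞) := by
          rw [ENNReal.tsum_add, ENNReal.tsum_mul_left]
      _ ≤ (L : ℝ≥0∞) * (∫⁻ x in A, (∑' n, g n x) ∂(μH[2] : Measure X)) + ε := by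
          rw [lintegral_tsum fun n => (hgm n).aemeasurable]
          exact add_le_add_right hε'sum.le _

lemma P_simple (hm : LipschitzWith L m) (A : Set X) (ψ : SimpleFunc X ℝ≥0) :
    P m L A (fun x => (ψ x : ℝ≥0∞)) := by
  induction ψ using SimpleFunc.induction with
  | const c hs =>
      rename_i s
      have heq : (fun x => (((SimpleFunc.piecewise s hs (SimpleFunc.const X c)
          (SimpleFunc.const X 0)) x : ℝ≥0) : ℝ≥0∞))
          = s.indicator fun _ => (c : ℝ≥0∞) := by
        funext x
        by_cases hx : x ∈ s <;>
          simp [SimpleFunc.piecewise_apply, hx, Set.indicator]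
      rw [heq]
      exact P_indicator hm A c hs
  | @add f g _ hf hg =>
      have heq : (fun x => (((f + g) x : ℝ≥0) : ℝ≥0∞))
          = (fun x => ((f x : ℝ≥0) : ℝ≥0∞)) + fun x => ((g x : ℝ≥0) : ℝ≥0∞) := by
        funext x; simp
      rw [heq]
      exact P_add f.measurable.coe_nnreal_ennreal hf hg

end CoareaAux

open CoareaAux

/-- Coarea inequality: for `A ⊂ X` Borel, `m : X → ℝ` an `L`-Lipschitz function and
`g : A → [0,∞]` Borel, one has
`∫_ℝ ∫_{A ∩ m⁻¹(t)} g dℋ¹ dt ≤ (4L/π) ∫_A g dℋ²`,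
where `ℋ¹ = μH[1]` and `ℋ²` is the Hausdorff 2-measure with normalization `π/4`
(i.e. `(π/4) • μH[2]`). -/
theorem stmt3 {X : Type*} [MetricSpace X] [MeasurableSpace X] [BorelSpace X]
    (A : Set X) (hA : MeasurableSet A) (m : X → ℝ) (L : ℝ≥0) (hm : LipschitzWith L m)
    (g : X → ℝ≥0∞) (hg : Measurable g) :
    ∫⁻ t : ℝ, (∫⁻ x in A ∩ m ⁻¹' {t}, g x ∂(μH[1] : Measure X)) ≤
      ENNReal.ofReal (4 * (L : ℝ) / Real.pi) *
        ∫⁻ x in A, g x ∂((ENNReal.ofReal (Real.pi / 4)) • (μH[2] : Measure X)) := by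
  have key : ∫⁻ t : ℝ, (∫⁻ x in A ∩ m ⁻¹' {t}, g x ∂(μH[1] : Measure X)) ≤
      (L : ℝ≥0∞) * ∫⁻ x in A, g x ∂(μH[2] : Measure X) := by
    have hP : P m L A g := by
      have hrepr : (fun x => ∑' n, ((SimpleFunc.eapproxDiff g n) x : ℝ≥0∞)) = g := by
        funext x; exact SimpleFunc.tsum_eapproxDiff g hg x
      rw [← hrepr]
      exact P_tsum (fun n => (SimpleFunc.eapproxDiff g n).measurable.coe_nnreal_ennreal)
        (fun n => P_simple hm A _)
    refine ENNReal.le_of_forall_pos_le_add fun δ hδ _ => ?_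
    obtain ⟨h, hmeas, hle, hint⟩ := hP (δ : ℝ≥0∞) (by exact_mod_cast hδ)
    exact (lintegral_mono hle).trans hint
  rw [Measure.restrict_smul, lintegral_smul_measure, smul_eq_mul, ← mul_assoc,
    ← ENNReal.ofReal_mul (by positivity)]
  have hc : 4 * (L : ℝ) / Real.pi * (Real.pi / 4) = (L : ℝ) := by
    field_simp
  rw [hc, ENNReal.ofReal_coe_nnreal]
  exact key
end

section
/- In the plane ℝ² with Lebesgue measure, let Q = [0,1]², let Γ₁ be the family of horizontal segments [0,1]×{t}, t ∈ [0,1], and suppose E ⊂ Q is a measurable set with |Q \ E| ≤ 1/M. If ρ : Q → [0,∞] is Borel, vanishes a.e. on E, and satisfies ∫_{[0,1]×{t}} ρ dℋ¹ ≥ 1 for every t ∈ [0,1], then ∫_Q ρ² dx ≥ M. -/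
open MeasureTheory Set
open scoped ENNReal

/-- If `ρ` vanishes a.e. on `E ⊆ Q = [0,1]²` with `|Q \ E| ≤ 1/M`, and `ρ` integrates to at
least `1` over every horizontal segment `[0,1] × {t}`, then `∫_Q ρ² ≥ M`. -/
theorem stmt5 (M : ℝ) (hM : 0 < M) (E : Set (ℝ × ℝ))
    (hE : E ⊆ Icc (0:ℝ) 1 ×ˢ Icc (0:ℝ) 1) (hEm : MeasurableSet E)
    (hsmall : volume ((Icc (0:ℝ) 1 ×ˢ Icc (0:ℝ) 1) \ E) ≤ ENNReal.ofReal (1 / M))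
    (ρ : ℝ × ℝ → ℝ≥0∞) (hρ : Measurable ρ)
    (hvanish : ∀ᵐ x ∂(volume.restrict E), ρ x = 0)
    (hadm : ∀ t ∈ Icc (0:ℝ) 1, 1 ≤ ∫⁻ s in Icc (0:ℝ) 1, ρ (s, t)) :
    ENNReal.ofReal M ≤ ∫⁻ x in Icc (0:ℝ) 1 ×ˢ Icc (0:ℝ) 1, ρ x ^ 2 := by
  set Q : Set (ℝ × ℝ) := Icc (0:ℝ) 1 ×ˢ Icc (0:ℝ) 1 with hQ
  set F : Set (ℝ × ℝ) := Q \ E with hF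
  have hQm : MeasurableSet Q := (measurableSet_Icc.prod measurableSet_Icc)
  have hFm : MeasurableSet F := hQm.diff hEm
  -- Step 1: Fubini
  have h1 : 1 ≤ ∫⁻ x in Q, ρ x := by
    have : ∫⁻ x in Q, ρ x = ∫⁻ t in Icc (0:ℝ) 1, ∫⁻ s in Icc (0:ℝ) 1, ρ (s, t) := by
      rw [hQ, Measure.volume_eq_prod, ← Measure.prod_restrict,
        lintegral_prod_symm' _ hρ]
    rw [this]
    calc (1:ℝ≥0∞) = ∫⁻ _ in Icc (0:ℝ) 1, 1 := by simp
    _ ≤ _ := setLIntegral_mono hρ.lintegral_prod_left' (fun t ht => hadm t ht)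
  -- Step 2: ρ vanishes on E, so integral concentrates on F
  have h2 : 1 ≤ ∫⁻ x in F, ρ x := by
    have hEQ : ∫⁻ x in E, ρ x = 0 := by
      rw [lintegral_congr_ae hvanish]; simp
    have hunion : F ∪ E = Q := diff_union_of_subset hE
    rw [← hunion, lintegral_union hEm disjoint_sdiff_left, hEQ, add_zero] at h1
    exact h1
  -- Step 3: Cauchy–Schwarz on F
  set A : ℝ≥0∞ := ∫⁻ x in F, ρ x ^ 2 with hA
  have hCS := ENNReal.lintegral_mul_le_Lp_mul_Lq (volume.restrict F)
    (Real.HolderConjugate.two_two : (2:ℝ).HolderConjugate 2)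
    hρ.aemeasurable (aemeasurable_const (b := (1:ℝ≥0∞)))
  simp only [Pi.mul_apply, mul_one, ENNReal.one_rpow, ENNReal.rpow_two, one_pow, one_mul,
    lintegral_const, Measure.restrict_apply MeasurableSet.univ, univ_inter] at hCS
  have h3 : 1 ≤ A * volume F := by
    have h12 : (1:ℝ≥0∞) ≤ (A * volume F) ^ (1/2 : ℝ) := by
      rw [ENNReal.mul_rpow_of_nonneg _ _ (by norm_num : (0:ℝ) ≤ 1/2)]
      exact le_trans h2 hCS
    have := ENNReal.rpow_le_rpow h12 (by norm_num : (0:ℝ) ≤ 2)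
    rwa [ENNReal.one_rpow, ← ENNReal.rpow_mul, one_div, inv_mul_cancel₀ (two_ne_zero),
      ENNReal.rpow_one] at this
  -- Step 4: conclude
  have h4 : ENNReal.ofReal M ≤ A := by
    have hb0 : volume F ≠ 0 := by
      intro h; rw [h, mul_zero] at h3; simp at h3
    have hbt : volume F ≠ ∞ := ne_top_of_le_ne_top ENNReal.ofReal_ne_top hsmall
    have hdiv : 1 / volume F ≤ A :=
      (ENNReal.div_le_iff_le_mul (Or.inl hb0) (Or.inl hbt)).2 h3
    have hM' : ENNReal.ofReal M = 1 / ENNReal.ofReal (1 / M) := by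
      rw [one_div M, ENNReal.ofReal_inv_of_pos hM, one_div, inv_inv]
    rw [hM']
    exact le_trans (ENNReal.div_le_div_left hsmall 1) hdiv
  exact le_trans h4 (lintegral_mono_set diff_subset)
end

section
/- Let C be a symmetric convex body in ℝ² and let E ⊂ C be an ellipse centered at the origin of maximal Lebesgue area among ellipses contained in C. Then C ⊂ √2 · E. -/
open MeasureTheory Metric Set
open scoped Pointwise RealInnerProductSpace

noncomputable def Mmap (y : EuclideanSpace ℝ (Fin 2)) (b k : ℝ) :
    EuclideanSpace ℝ (Fin 2) →ₗ[ℝ] EuclideanSpace ℝ (Fin 2) where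
  toFun := fun z => b • z + (k * ⟪y, z⟫) • y
  map_add' := by intro u v; simp [inner_add_right]; module
  map_smul' := by intro c u; simp [inner_smul_right]; module

lemma Mmap_apply (y : EuclideanSpace ℝ (Fin 2)) (b k : ℝ) (z : EuclideanSpace ℝ (Fin 2)) :
    Mmap y b k z = b • z + (k * ⟪y, z⟫) • y := rfl

lemma Mmap_det (y : EuclideanSpace ℝ (Fin 2)) (b k : ℝ) :
    LinearMap.det (Mmap y b k) = b^2 + k*b*(y 0^2 + y 1^2) := by
  rw [← LinearMap.det_toMatrix (EuclideanSpace.basisFun (Fin 2) ℝ).toBasis, Matrix.det_fin_two]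
  simp [LinearMap.toMatrix_apply, Mmap, EuclideanSpace.inner_single_right,
    EuclideanSpace.basisFun_apply, EuclideanSpace.single_apply]
  ring

lemma Mmap_comp (y : EuclideanSpace ℝ (Fin 2)) (b k b' k' : ℝ)
    (hb : b*b' = 1) (hk : b*k' + k*b' + k*k'*‖y‖^2 = 0) :
    (Mmap y b k).comp (Mmap y b' k') = LinearMap.id := by
  refine LinearMap.ext fun z => ?_
  rw [LinearMap.comp_apply, Mmap_apply, Mmap_apply, LinearMap.id_apply]
  rw [inner_add_right, inner_smul_right, inner_smul_right, real_inner_self_eq_norm_sq]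
  match_scalars
  · linear_combination hb
  · linear_combination (⟪y, z⟫ : ℝ) * hk

lemma aux_t (R a b m s2 : ℝ) (hR : 1 < R) (ha1 : 1 ≤ a) (haR : a < R) (hb : 0 < b)
    (hcon : a^2 + b^2*(R^2-1) = R^2) (hm : 0 ≤ m) (hm1 : m ≤ 1)
    (hs : s2 ≤ 1 - m^2) (hs0 : 0 ≤ s2) :
    ∃ t : ℝ, 0 ≤ t ∧ t < 1 ∧ (a*m - t*R)^2 + b^2*s2 ≤ (1-t)^2 := by
  have hR0 : (0:ℝ) < R := by linarith
  have hden : (0:ℝ) < R^2 - 1 := by nlinarith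
  have ha2 : 1 ≤ a^2 := by nlinarith
  have hb1 : b^2 ≤ 1 := by nlinarith
  rcases le_or_gt (R*a*m) 1 with h | h
  · refine ⟨0, le_refl 0, by norm_num, ?_⟩
    have hRm : R*m ≤ 1 := by
      nlinarith [mul_nonneg (mul_nonneg hR0.le hm) (sub_nonneg.2 ha1)]
    have hR2m2 : R^2*m^2 ≤ 1 := by nlinarith [mul_nonneg hR0.le hm]
    nlinarith [mul_nonneg (sub_nonneg.2 hb1) (sub_nonneg.2 hR2m2)]
  · have ham : a*m < R := by
      nlinarith [mul_le_of_le_one_right (show (0:ℝ) ≤ a by linarith) hm1]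
    refine ⟨(R*a*m-1)/(R^2-1), div_nonneg (by linarith) hden.le,
      (div_lt_one hden).2 (by nlinarith [mul_lt_mul_of_pos_left ham hR0]), ?_⟩
    have he1 : a*m - ((R*a*m-1)/(R^2-1))*R = (R - a*m)/(R^2-1) := by
      field_simp; ring
    have he2 : 1 - (R*a*m-1)/(R^2-1) = R*(R - a*m)/(R^2-1) := by
      field_simp; ring
    rw [he1, he2, ← sub_nonneg]
    have heq : (R*(R-a*m)/(R^2-1))^2 - (((R-a*m)/(R^2-1))^2 + b^2*s2)
        = ((R*(R-a*m))^2 - (R-a*m)^2 - b^2*s2*(R^2-1)^2)/(R^2-1)^2 := by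
      field_simp; ring
    rw [heq]
    apply div_nonneg _ (by positivity)
    have h1 : b^2*(R^2-1) = R^2 - a^2 := by linarith
    have hra : (0:ℝ) ≤ R^2 - a^2 := by nlinarith
    have h2 : b^2*s2*(R^2-1)^2 ≤ (R^2-a^2)*(1-m^2)*(R^2-1) := by
      have e : b^2*s2*(R^2-1)^2 = (b^2*(R^2-1))*s2*(R^2-1) := by ring
      rw [e, h1]
      exact mul_le_mul_of_nonneg_right (mul_le_mul_of_nonneg_left hs hra) hden.le
    have h3 : (R^2-a^2)*(1-m^2)*(R^2-1) ≤ (R-a*m)^2*(R^2-1) := by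
      have hx : (R^2-a^2)*(1-m^2) ≤ (R-a*m)^2 := by
        have hid : (R-a*m)^2 - (R^2-a^2)*(1-m^2) = (a - R*m)^2 := by ring
        linarith [sq_nonneg (a - R*m), hid]
      exact mul_le_mul_of_nonneg_right hx hden.le
    have h4 : (R*(R-a*m))^2 = (R-a*m)^2 + (R-a*m)^2*(R^2-1) := by ring
    linarith [h2, h3, h4]

set_option maxHeartbeats 2000000 in
/-- John's theorem in the plane -/
theorem stmt10 (C : Set (EuclideanSpace ℝ (Fin 2)))
    (hCcomp : IsCompact C) (hCconv : Convex ℝ C) (hCint : (interior C).Nonempty)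
    (hCsymm : ∀ x ∈ C, -x ∈ C)
    (T : EuclideanSpace ℝ (Fin 2) ≃ₗ[ℝ] EuclideanSpace ℝ (Fin 2))
    (E : Set (EuclideanSpace ℝ (Fin 2))) (hE : E = T '' closedBall 0 1)
    (hEC : E ⊆ C)
    (hmax : ∀ S : EuclideanSpace ℝ (Fin 2) ≃ₗ[ℝ] EuclideanSpace ℝ (Fin 2),
      (S '' closedBall 0 1) ⊆ C → volume (S '' closedBall 0 1) ≤ volume E) :
    C ⊆ (Real.sqrt 2) • E := by
  have hB : closedBall (0:EuclideanSpace ℝ (Fin 2)) 1 ⊆ T ⁻¹' C :=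
    Set.image_subset_iff.mp (hE ▸ hEC)
  have hKconv : Convex ℝ (T ⁻¹' C) := hCconv.linear_preimage T.toLinearMap
  have key : ∀ x ∈ C, ‖T.symm x‖ ≤ Real.sqrt 2 := by
    intro x hx
    by_contra hR'
    push_neg at hR'
    set y := T.symm x with hy
    set R := ‖y‖ with hRdef
    have hR2 : 2 < R^2 := by
      nlinarith [Real.sq_sqrt (show (0:ℝ) ≤ 2 by norm_num), Real.sqrt_nonneg 2, hR']
    have hR1 : 1 < R := by nlinarith [norm_nonneg y]
    have hR0 : (0:ℝ) < R := by linarith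
    have hden : (0:ℝ) < R^2 - 1 := by nlinarith
    set a := Real.sqrt (R^2/2) with hadef
    set b := Real.sqrt (R^2/(2*(R^2-1))) with hbdef
    have ha2 : a^2 = R^2/2 := Real.sq_sqrt (by positivity)
    have hb2 : b^2 = R^2/(2*(R^2-1)) := Real.sq_sqrt (by positivity)
    have ha0 : 0 < a := Real.sqrt_pos.2 (by positivity)
    have hb0 : 0 < b := Real.sqrt_pos.2 (by positivity)
    have ha1 : 1 ≤ a := by nlinarith
    have haR : a < R := by nlinarith
    have hcon : a^2 + b^2*(R^2-1) = R^2 := by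
      rw [ha2, hb2]; field_simp; ring
    have hab : 1 < a*b := by
      have habsq : (a*b)^2 = R^4/(4*(R^2-1)) := by
        rw [mul_pow, ha2, hb2]; field_simp; ring
      have h5 : 1 < (a*b)^2 := by
        rw [habsq, lt_div_iff₀ (by positivity)]
        nlinarith [mul_pos (sub_pos.2 hR2) (sub_pos.2 hR2)]
      nlinarith [mul_pos ha0 hb0, h5]
    set k := (a-b)/R^2 with hkdef
    set k' := (a⁻¹-b⁻¹)/R^2 with hk'def
    have hcomp1 : (Mmap y b k).comp (Mmap y b⁻¹ k') = LinearMap.id := by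
      apply Mmap_comp
      · field_simp
      · rw [← hRdef, hkdef, hk'def]; field_simp; ring
    have hcomp2 : (Mmap y b⁻¹ k').comp (Mmap y b k) = LinearMap.id := by
      apply Mmap_comp
      · field_simp
      · rw [← hRdef, hkdef, hk'def]; field_simp; ring
    set Meq : EuclideanSpace ℝ (Fin 2) ≃ₗ[ℝ] EuclideanSpace ℝ (Fin 2) :=
      LinearEquiv.ofLinear (Mmap y b k) (Mmap y b⁻¹ k') hcomp1 hcomp2 with hMeqdef
    clear_value a b k k' Meq
    have hyK : y ∈ T ⁻¹' C := by
      rw [Set.mem_preimage, hy, LinearEquiv.apply_symm_apply]; exact hx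
    have hyK' : -y ∈ T ⁻¹' C := by
      rw [Set.mem_preimage, map_neg, hy, LinearEquiv.apply_symm_apply]
      exact hCsymm x hx
    have himg : (Meq '' closedBall 0 1) ⊆ T ⁻¹' C := by
      rintro _ ⟨u, hu, rfl⟩
      have hu1 : ‖u‖ ≤ 1 := mem_closedBall_zero_iff.mp hu
      have hMequ : Meq u = b • u + (k * ⟪y,u⟫) • y := by
        rw [hMeqdef, LinearEquiv.ofLinear_apply, Mmap_apply]
      set c : ℝ := ⟪y,u⟫ / R with hcdef
      have hyu : (⟪y,u⟫:ℝ) = c*R := by rw [hcdef]; field_simp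
      clear_value c
      have hcabs : |c| ≤ ‖u‖ := by
        rw [hcdef, abs_div, abs_of_pos hR0, div_le_iff₀ hR0]
        calc |(⟪y,u⟫:ℝ)| ≤ ‖y‖ * ‖u‖ := abs_real_inner_le_norm y u
          _ = ‖u‖ * R := by rw [← hRdef]; ring
      have hm1 : |c| ≤ 1 := le_trans hcabs hu1
      have hcsq : c^2 ≤ ‖u‖^2 := by
        rw [← sq_abs]; exact pow_le_pow_left₀ (abs_nonneg c) hcabs 2
      have hu2 : ‖u‖^2 ≤ 1 := by
        calc ‖u‖^2 ≤ 1^2 := pow_le_pow_left₀ (norm_nonneg u) hu1 2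
          _ = 1 := one_pow 2
      have hs0 : (0:ℝ) ≤ ‖u‖^2 - c^2 := by linarith
      have hsle : ‖u‖^2 - c^2 ≤ 1 - |c|^2 := by rw [sq_abs]; linarith
      obtain ⟨t, ht0, ht1, hineq⟩ := aux_t R a b (|c|) (‖u‖^2 - c^2) hR1 ha1 haR hb0
        hcon (abs_nonneg c) hm1 hsle hs0
      have step : ∀ v ∈ T ⁻¹' C, ‖Meq u - t • v‖ ≤ 1 - t → Meq u ∈ T ⁻¹' C := by
        intro v hv hle
        have h1' : (0:ℝ) < 1 - t := by linarith
        have hq : (1-t)⁻¹ • (Meq u - t • v) ∈ closedBall (0:EuclideanSpace ℝ (Fin 2)) 1 := by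
          rw [mem_closedBall_zero_iff, norm_smul, Real.norm_eq_abs,
            abs_of_pos (inv_pos.2 h1'), inv_mul_le_iff₀ h1', mul_one]
          exact hle
        have hcomb := hKconv hv (hB hq) ht0 h1'.le (by ring)
        have : t • v + (1-t) • ((1-t)⁻¹ • (Meq u - t • v)) = Meq u := by
          rw [smul_smul, mul_inv_cancel₀ h1'.ne', one_smul]; abel
        rwa [this] at hcomb
      have hnormsq : ∀ τ : ℝ, ‖Meq u - τ • y‖^2
          = b^2*(‖u‖^2 - c^2) + (a*c - τ*R)^2 := by
        intro τ
        have hsub : Meq u - τ • y = b • u + (k*⟪y,u⟫ - τ) • y := by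
          rw [hMequ]; module
        have hyu' : (⟪u,y⟫:ℝ) = c*R := by rw [real_inner_comm]; exact hyu
        rw [hsub, norm_add_sq_real]
        simp only [real_inner_smul_left, real_inner_smul_right, norm_smul, mul_pow,
          Real.norm_eq_abs, sq_abs, hyu, hyu', hkdef, ← hRdef]
        field_simp
        ring
      rcases le_or_gt 0 c with hcpos | hcneg
      · have habs : |c| = c := abs_of_nonneg hcpos
        apply step y hyK
        have h1 := hnormsq t
        rw [habs] at hineq
        nlinarith [norm_nonneg (Meq u - t • y), h1, hineq]
      · have habs : |c| = -c := abs_of_neg hcneg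
        apply step (-y) hyK'
        have h1 := hnormsq (-t)
        rw [habs] at hineq
        have h2 : Meq u - t • (-y) = Meq u - (-t) • y := by module
        rw [h2]
        nlinarith [norm_nonneg (Meq u - (-t) • y), h1, hineq]
    -- volume contradiction
    set Seq := Meq.trans T with hSeqdef
    have hSimg : Seq '' closedBall 0 1 = T '' (Meq '' closedBall 0 1) := by
      rw [hSeqdef, Set.image_image]
      rfl
    have hsubC : Seq '' closedBall 0 1 ⊆ C := by
      rw [hSimg]
      exact (Set.image_mono himg).trans (Set.image_preimage_subset _ _)
    have hle := hmax Seq hsubC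
    have hcoord : y 0^2 + y 1^2 = R^2 := by
      have h := EuclideanSpace.norm_eq y
      rw [← hRdef] at h
      have : R^2 = (∑ i, ‖y i‖^2 : ℝ) := by
        rw [h, Real.sq_sqrt (by positivity)]
      rw [this, Fin.sum_univ_two]
      simp [sq_abs]
    have hdetM : LinearMap.det (Mmap y b k) = a*b := by
      rw [Mmap_det, hcoord, hkdef]
      field_simp
      ring
    have hdetS : LinearMap.det (Seq : EuclideanSpace ℝ (Fin 2) →ₗ[ℝ] EuclideanSpace ℝ (Fin 2))
        = LinearMap.det (T : EuclideanSpace ℝ (Fin 2) →ₗ[ℝ] EuclideanSpace ℝ (Fin 2)) * (a*b) := by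
      rw [hSeqdef]
      have : ((Meq.trans T : EuclideanSpace ℝ (Fin 2) ≃ₗ[ℝ] EuclideanSpace ℝ (Fin 2)) :
          EuclideanSpace ℝ (Fin 2) →ₗ[ℝ] EuclideanSpace ℝ (Fin 2))
          = (T : EuclideanSpace ℝ (Fin 2) →ₗ[ℝ] EuclideanSpace ℝ (Fin 2)).comp
            (Meq : EuclideanSpace ℝ (Fin 2) →ₗ[ℝ] EuclideanSpace ℝ (Fin 2)) := rfl
      rw [this, LinearMap.det_comp]
      congr 1
      rw [hMeqdef]
      exact hdetM
    have hvol1 : volume (Seq '' closedBall 0 1)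
        = ENNReal.ofReal |LinearMap.det (Seq : EuclideanSpace ℝ (Fin 2) →ₗ[ℝ] EuclideanSpace ℝ (Fin 2))|
          * volume (closedBall (0:EuclideanSpace ℝ (Fin 2)) 1) := by
      rw [← Measure.addHaar_image_linearMap volume _ (closedBall 0 1)]
      rfl
    have hvol2 : volume E
        = ENNReal.ofReal |LinearMap.det (T : EuclideanSpace ℝ (Fin 2) →ₗ[ℝ] EuclideanSpace ℝ (Fin 2))|
          * volume (closedBall (0:EuclideanSpace ℝ (Fin 2)) 1) := by
      rw [hE, ← Measure.addHaar_image_linearMap volume _ (closedBall 0 1)]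
      rfl
    rw [hvol1, hvol2] at hle
    have hvB0 : volume (closedBall (0:EuclideanSpace ℝ (Fin 2)) 1) ≠ 0 :=
      (measure_closedBall_pos volume 0 one_pos).ne'
    have hvBtop : volume (closedBall (0:EuclideanSpace ℝ (Fin 2)) 1) ≠ ⊤ :=
      measure_closedBall_lt_top.ne
    have hdetT0 : LinearMap.det (T : EuclideanSpace ℝ (Fin 2) →ₗ[ℝ] EuclideanSpace ℝ (Fin 2)) ≠ 0 :=
      (LinearEquiv.isUnit_det' T).ne_zero
    have hdetTpos : 0 < |LinearMap.det (T : EuclideanSpace ℝ (Fin 2) →ₗ[ℝ] EuclideanSpace ℝ (Fin 2))| :=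
      abs_pos.2 hdetT0
    rw [ENNReal.mul_le_mul_iff_left hvB0 hvBtop] at hle
    rw [ENNReal.ofReal_le_ofReal_iff (abs_nonneg _)] at hle
    rw [hdetS, abs_mul, abs_of_pos (by positivity : (0:ℝ) < a*b)] at hle
    nlinarith [hdetTpos, hab, hle]
  intro x hx
  have h := key x hx
  have h2 : (Real.sqrt 2) ≠ 0 := by positivity
  rw [Set.mem_smul_set_iff_inv_smul_mem₀ h2, hE]
  refine ⟨(Real.sqrt 2)⁻¹ • T.symm x, ?_, ?_⟩
  · rw [mem_closedBall_zero_iff, norm_smul, Real.norm_eq_abs,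
      abs_of_pos (by positivity : (0:ℝ) < (Real.sqrt 2)⁻¹)]
    rw [inv_mul_le_iff₀ (by positivity), mul_one]
    exact h
  · rw [_root_.map_smul, LinearEquiv.apply_symm_apply]
end

section
/- Let ‖·‖ be a norm on ℝ² whose closed unit ball is C, let r > 0 be such that the Euclidean ball B(0,r) is the maximal-area ellipse contained in C, and let R > 0 scale so that C = {y : ‖y‖ ≤ R} (i.e. R = 1). Let J = ℋ²_‖·‖(C)/|C| = πR²/|C| be the ratio of the Hausdorff 2-measure in the norm ‖·‖ to Lebesgue measure. Then R²/r² ≥ J ≥ R²/(2r²); in particular the operator norm L = R/r of the identity from (ℝ²,Euclidean) to (ℝ²,‖·‖⁻¹-scaled) satisfies L²/J ≤ 2. -/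
open MeasureTheory Metric Set

local notation "V2" => EuclideanSpace ℝ (Fin 2)

private lemma vol_cb (ρ : ℝ) :
    volume (closedBall (0:V2) ρ) = (ENNReal.ofReal ρ)^2 * ENNReal.ofReal Real.pi := by
  rw [EuclideanSpace.volume_closedBall]
  norm_num [Real.Gamma_two, Real.sq_sqrt Real.pi_pos.le]

private noncomputable def perp (e : V2) : V2 :=
  EuclideanSpace.single 0 (-(e 1)) + EuclideanSpace.single 1 (e 0)

private lemma perp0 (e : V2) : perp e 0 = -(e 1) := by
  simp [perp, EuclideanSpace.single_apply]

private lemma perp1 (e : V2) : perp e 1 = e 0 := by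
  simp [perp, EuclideanSpace.single_apply]

private noncomputable def emap (a b : ℝ) (e : V2) : V2 →ₗ[ℝ] V2 where
  toFun v := (a * v 0) • e + (b * v 1) • perp e
  map_add' v w := by
    simp only [PiLp.add_apply, mul_add, add_smul]
    module
  map_smul' c v := by
    simp only [PiLp.smul_apply, smul_eq_mul, RingHom.id_apply]
    module

private lemma emap_apply (a b : ℝ) (e v : V2) :
    emap a b e v = (a * v 0) • e + (b * v 1) • perp e := rfl

private lemma emap0 (a b : ℝ) (e v : V2) :
    emap a b e v 0 = a * v 0 * e 0 - b * v 1 * e 1 := by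
  simp only [emap_apply, PiLp.add_apply, PiLp.smul_apply, smul_eq_mul, perp0]
  ring

private lemma emap1 (a b : ℝ) (e v : V2) :
    emap a b e v 1 = a * v 0 * e 1 + b * v 1 * e 0 := by
  simp only [emap_apply, PiLp.add_apply, PiLp.smul_apply, smul_eq_mul, perp1]

private lemma emap_det (a b : ℝ) (e : V2) (he2 : (e 0)^2 + (e 1)^2 = 1) :
    (LinearMap.toMatrix (EuclideanSpace.basisFun (Fin 2) ℝ).toBasis
      (EuclideanSpace.basisFun (Fin 2) ℝ).toBasis (emap a b e)).det = a * b := by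
  rw [Matrix.det_fin_two]
  simp only [LinearMap.toMatrix_apply, OrthonormalBasis.coe_toBasis,
    OrthonormalBasis.coe_toBasis_repr_apply, EuclideanSpace.basisFun_repr,
    EuclideanSpace.basisFun_apply, emap0, emap1, EuclideanSpace.single_apply]
  norm_num
  linear_combination a*b*he2

set_option maxHeartbeats 1000000 in
private lemma john (N : V2 → ℝ)
    (hNadd : ∀ x y, N (x + y) ≤ N x + N y)
    (hNsmul : ∀ (c : ℝ) (x), N (c • x) = |c| * N x)
    (C : Set V2) (hC : C = {x | N x ≤ 1})
    (r : ℝ) (hr : 0 < r) (hball : closedBall (0 : V2) r ⊆ C)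
    (hmax : ∀ S : V2 ≃ₗ[ℝ] V2, (S '' closedBall 0 1) ⊆ C →
        volume (S '' closedBall 0 1) ≤ volume (closedBall (0 : V2) r))
    {x : V2} (hx : x ∈ C) : ‖x‖ ≤ Real.sqrt 2 * r := by
  by_contra hcon
  push_neg at hcon
  set s := ‖x‖ with hs
  have hs0 : 0 < s := lt_trans (by positivity) hcon
  have h22 : (Real.sqrt 2)^2 = 2 := Real.sq_sqrt (by norm_num)
  have hs2 : 2 * r^2 < s^2 := by
    have h := pow_lt_pow_left₀ hcon (by positivity : (0:ℝ) ≤ Real.sqrt 2 * r) two_ne_zero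
    calc 2 * r^2 = (Real.sqrt 2 * r)^2 := by rw [mul_pow, h22]
    _ < s^2 := h
  set d := s^2 - r^2 with hd_def
  have hd0 : 0 < d := by nlinarith
  have h2d : 0 < 2*d := by linarith
  -- the unit vector e along x
  set e : V2 := s⁻¹ • x with he_def
  have hxe : x = s • e := by rw [he_def, smul_inv_smul₀ hs0.ne']
  have hee : ‖e‖ = 1 := by
    rw [he_def, norm_smul, Real.norm_eq_abs, abs_of_pos (inv_pos.mpr hs0)]
    field_simp
    exact hs.symm
  have he2 : (e 0)^2 + (e 1)^2 = 1 := by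
    rw [EuclideanSpace.norm_eq] at hee
    simp only [Real.norm_eq_abs, Fin.sum_univ_two, sq_abs] at hee
    have h0 : (0:ℝ) ≤ (e 0)^2 + (e 1)^2 := by positivity
    have := Real.sq_sqrt h0
    rw [hee] at this; linarith
  -- the semi-axes
  set a : ℝ := s / Real.sqrt 2 with ha_def
  set b : ℝ := r * s / Real.sqrt (2*d) with hb_def
  have ha : 0 < a := by
    apply div_pos hs0 (Real.sqrt_pos.mpr (by norm_num))
  have hb : 0 < b := div_pos (mul_pos hr hs0) (Real.sqrt_pos.mpr h2d)
  have ha2 : 2 * a^2 = s^2 := by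
    rw [ha_def, div_pow, h22]; ring
  have hb2 : b^2 * (2*d) = r^2 * s^2 := by
    rw [hb_def, div_pow, Real.sq_sqrt h2d.le]
    field_simp
  have habsq : (a*b)^2 * (4*d) = r^2 * s^2 * s^2 := by
    linear_combination 2*a^2 * hb2 + r^2*s^2 * ha2
  have key : (0:ℝ) < r^2*(s^2-2*r^2)^2 :=
    mul_pos (by positivity) (pow_pos (by linarith) 2)
  have h4 : r^2*r^2*(4*d) < (a*b)^2*(4*d) := by
    rw [habsq]
    have hq : r^2*s^2*s^2 - r^2*r^2*(4*d) = r^2*(s^2-2*r^2)^2 := by rw [hd_def]; ring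
    linarith [key, hq]
  have hab : r^2 < a*b := by
    have h' : (r^2)^2 < (a*b)^2 := by
      have h5 := (mul_lt_mul_iff_of_pos_right (by linarith : (0:ℝ) < 4*d)).mp h4
      calc (r^2)^2 = r^2*r^2 := by ring
        _ < (a*b)^2 := h5
    exact lt_of_pow_lt_pow_left₀ 2 (mul_pos ha hb).le h'
  have has : a < s := lt_of_pow_lt_pow_left₀ 2 hs0.le
    (by have h6 := sq_nonneg a; linarith [ha2, mul_pos ha ha,
      (by ring : a*a = a^2), (by ring : s*s = s^2)] : a^2 < s^2)
  -- build the linear equivalence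
  set B := (EuclideanSpace.basisFun (Fin 2) ℝ).toBasis with hB_def
  have hMdet : IsUnit (LinearMap.toMatrix B B (emap a b e)).det := by
    rw [hB_def, emap_det a b e he2]
    exact isUnit_iff_ne_zero.mpr (by positivity)
  set S : V2 ≃ₗ[ℝ] V2 := LinearEquiv.ofIsUnitDet hMdet with hS_def
  have hSf : ∀ v, S v = emap a b e v := fun v => LinearEquiv.ofIsUnitDet_apply hMdet v
  have hSim : ⇑S '' closedBall 0 1 = ⇑(emap a b e) '' closedBall 0 1 :=
    image_congr (fun v _ => hSf v)
  have hdet' : LinearMap.det (emap a b e) = a * b := by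
    rw [← LinearMap.det_toMatrix B (emap a b e), hB_def, emap_det a b e he2]
  -- the image of the unit ball is contained in C
  have hsub : ⇑S '' closedBall 0 1 ⊆ C := by
    rw [hSim]
    rintro _ ⟨v, hv, rfl⟩
    have hv2 : (v 0)^2 + (v 1)^2 ≤ 1 := by
      rw [mem_closedBall, dist_zero_right, EuclideanSpace.norm_eq] at hv
      simp only [Real.norm_eq_abs, Fin.sum_univ_two, sq_abs] at hv
      have h0 : (0:ℝ) ≤ (v 0)^2 + (v 1)^2 := by positivity
      have h1 := Real.sq_sqrt h0
      have h2 : (Real.sqrt ((v 0)^2 + (v 1)^2))^2 ≤ 1 :=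
        pow_le_one₀ (Real.sqrt_nonneg _) hv
      linarith
    set t := v 0 with ht_def
    set z := v 1 with hz_def
    set τ := |t| with hτ_def
    have hτt : τ^2 = t^2 := sq_abs t
    have hτ0 : 0 ≤ τ := abs_nonneg t
    have hτ1 : τ ≤ 1 := by
      have h1 : t^2 ≤ 1 := by linarith [sq_nonneg z]
      exact (sq_le_one_iff_abs_le_one (a := t)).mp h1
    set σ : ℝ := if 0 ≤ t then 1 else -1 with hσ_def
    have hστ : σ * τ = t := by
      rcases le_or_gt 0 t with h | h
      · rw [hσ_def, if_pos h, one_mul, hτ_def]; exact abs_of_nonneg h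
      · rw [hσ_def, if_neg (not_le.mpr h), hτ_def, abs_of_neg h]; ring
    have hσ1 : |σ| = 1 := by
      rcases le_or_gt 0 t with h | h
      · rw [hσ_def, if_pos h]; norm_num
      · rw [hσ_def, if_neg (not_le.mpr h)]; norm_num
    have hσ2 : σ^2 = 1 := by
      rcases le_or_gt 0 t with h | h
      · rw [hσ_def, if_pos h]; norm_num
      · rw [hσ_def, if_neg (not_le.mpr h)]; norm_num
    set lam := max 0 ((s*a*τ - r^2)/d) with hlam_def
    have hlam0 : 0 ≤ lam := le_max_left _ _
    have hlam1 : lam < 1 := by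
      rw [hlam_def, max_lt_iff]
      refine ⟨by norm_num, ?_⟩
      rw [div_lt_one hd0]
      have haτ : a * τ ≤ a := mul_le_of_le_one_right ha.le hτ1
      have h5 : s*(a*τ) ≤ s*a := mul_le_mul_of_nonneg_left haτ hs0.le
      have h6 : s*a < s*s := mul_lt_mul_of_pos_left has hs0
      linarith [h5, h6]
    -- the key inequality
    have hkey : (a*τ - lam*s)^2 + b^2*z^2 ≤ ((1-lam)*r)^2 := by
      rcases le_or_gt (s*a*τ - r^2) 0 with hcase | hcase
      · have hl : lam = 0 :=
          max_eq_left (div_nonpos_iff.mpr (Or.inr ⟨hcase, hd0.le⟩))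
        rw [hl]
        have hz2 : z^2 ≤ 1 - τ^2 := by linarith [hv2, hτt]
        have hbzd : b^2*z^2*(2*d) = r^2*s^2*z^2 := by linear_combination z^2 * hb2
        have hnn : 0 ≤ s*a*τ := mul_nonneg (mul_nonneg hs0.le ha.le) hτ0
        have h1 : s^2*a^2*τ^2 ≤ r^4 := by
          calc s^2*a^2*τ^2 = (s*a*τ)*(s*a*τ) := by ring
            _ ≤ r^2*r^2 := mul_self_le_mul_self hnn (by linarith)
            _ = r^4 := by ring
        have e1 : s^4*τ^2 ≤ 2*r^4 := by
          have hq : s^4*τ^2 = 2*(s^2*a^2*τ^2) := by linear_combination (-(s^2*τ^2))*ha2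
          linarith
        have e3 : s^4*τ^2*(s^2-2*r^2) ≤ 2*r^4*(s^2-2*r^2) :=
          mul_le_mul_of_nonneg_right e1 (by linarith)
        have e4 : 2*r^4*(s^2-2*r^2) ≤ r^2*s^2*(s^2-2*r^2) := by
          have hq : r^2*s^2*(s^2-2*r^2) - 2*r^4*(s^2-2*r^2) = r^2*(s^2-2*r^2)^2 := by ring
          linarith [mul_nonneg (mul_nonneg hr.le hr.le) (sq_nonneg (s^2-2*r^2))]
        have e5 : r^2*s^4*z^2 ≤ r^2*s^4*(1 - τ^2) :=
          mul_le_mul_of_nonneg_left hz2 (by positivity)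
        have expand1 : a^2*τ^2*(2*d*s^2) = d*(s^4*τ^2) := by
          linear_combination (d*s^2*τ^2)*ha2
        have expand2 : b^2*z^2*(2*d*s^2) = r^2*s^4*z^2 := by
          linear_combination s^2 * hbzd
        have e6 : (a^2*τ^2 + b^2*z^2)*(2*d*s^2) ≤ r^2*(2*d*s^2) := by
          have hds : d*(s^4*τ^2) = s^4*τ^2*(s^2-2*r^2) + r^2*s^4*τ^2 := by
            rw [hd_def]; ring
          have hrs : r^2*(2*d*s^2) = 2*r^2*s^4 - 2*r^4*s^2 := by
            rw [hd_def]; ring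
          linarith [e3, e4, e5, expand1, expand2, hds, hrs]
        have e7 : a^2*τ^2 + b^2*z^2 ≤ r^2 :=
          le_of_mul_le_mul_right (by linarith [e6])
            (by have := hd0; positivity : (0:ℝ) < 2*d*s^2)
        have hgoal : (a*τ - 0*s)^2 + b^2*z^2 = a^2*τ^2 + b^2*z^2 := by ring
        have hr2 : ((1-0:ℝ)*r)^2 = r^2 := by ring
        linarith [e7, hgoal, hr2]
      · have hl : lam = (s*a*τ - r^2)/d :=
          max_eq_right (le_of_lt (div_pos hcase hd0))
        have hld : lam * d = s*a*τ - r^2 := by rw [hl]; field_simp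
        have expand : d*(((1-lam)*r)^2 - ((a*τ - lam*s)^2 + b^2*z^2))
            = (s*a*τ - r^2)^2 + d*(r^2 - a^2*τ^2 - b^2*z^2) := by
          linear_combination (s*a*τ - r^2 - lam*d) * hld
        have hbzd : b^2*z^2*(2*d) = r^2*s^2*z^2 := by linear_combination z^2 * hb2
        have hz2 : z^2 ≤ 1 - τ^2 := by linarith [hv2, hτt]
        have hRHS : 0 ≤ (s*a*τ - r^2)^2 + d*(r^2 - a^2*τ^2 - b^2*z^2) := by
          have idty : 2*(s*a*τ - r^2)^2 + 2*d*r^2 - 2*d*a^2*τ^2 - r^2*s^2 + r^2*s^2*τ^2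
              = 2*r^2*(s*τ - a)^2 := by
            linear_combination (2*r^2 - 2*a^2*τ^2) * hd_def + (-(r^2)*(1-τ^2)) * ha2
          have h2t : 2*((s*a*τ - r^2)^2 + d*(r^2 - a^2*τ^2 - b^2*z^2))
              = 2*(s*a*τ - r^2)^2 + 2*d*r^2 - 2*d*a^2*τ^2 - r^2*s^2*z^2 := by
            linear_combination (-1 : ℝ) * hbzd
          have h3t : r^2*s^2*z^2 ≤ r^2*s^2*(1-τ^2) :=
            mul_le_mul_of_nonneg_left hz2 (by positivity)
          linarith [idty, h2t, h3t,
            mul_nonneg (mul_nonneg hr.le hr.le) (sq_nonneg (s*τ - a))]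
        by_contra hng
        push_neg at hng
        have h9 : d*(((1-lam)*r)^2 - ((a*τ - lam*s)^2 + b^2*z^2)) < 0 :=
          mul_neg_of_pos_of_neg hd0 (by linarith)
        linarith [expand, hRHS, h9]
    -- decompose f v as a convex combination
    have hfv0 := emap0 a b e v
    have hfv1 := emap1 a b e v
    set w : V2 := emap a b e v - lam • (σ • x) with hw_def
    have hw0 : w 0 = (a*t - lam*σ*s) * e 0 - b*z*e 1 := by
      simp only [hw_def, PiLp.sub_apply, PiLp.smul_apply, smul_eq_mul, hfv0, hxe]
      ring
    have hw1 : w 1 = (a*t - lam*σ*s) * e 1 + b*z*e 0 := by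
      simp only [hw_def, PiLp.sub_apply, PiLp.smul_apply, smul_eq_mul, hfv1, hxe]
      ring
    have hA : a*t - lam*σ*s = σ*(a*τ - lam*s) := by rw [← hστ]; ring
    have h1lam : (0:ℝ) < 1 - lam := by linarith
    have hwn : ‖w‖ ≤ (1 - lam) * r := by
      rw [EuclideanSpace.norm_eq]
      simp only [Real.norm_eq_abs, Fin.sum_univ_two, sq_abs, hw0, hw1]
      have hsum : ((a*t - lam*σ*s) * e 0 - b*z*e 1)^2 + ((a*t - lam*σ*s) * e 1 + b*z*e 0)^2
          = (a*τ - lam*s)^2 + b^2*z^2 := by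
        rw [hA]
        linear_combination (σ^2*(a*τ - lam*s)^2 + b^2*z^2) * he2 + (a*τ - lam*s)^2 * hσ2
      rw [hsum]
      calc Real.sqrt ((a*τ - lam*s)^2 + b^2*z^2) ≤ Real.sqrt (((1-lam)*r)^2) :=
            Real.sqrt_le_sqrt hkey
        _ = (1-lam)*r := Real.sqrt_sq (by positivity)
    -- conclude N (emap a b e v) ≤ 1
    have hNσx : N (σ • x) ≤ 1 := by
      rw [hNsmul, hσ1, one_mul]
      rw [hC] at hx; exact hx
    set u : V2 := (1-lam)⁻¹ • w with hu_def
    have hun : ‖u‖ ≤ r := by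
      rw [hu_def, norm_smul, Real.norm_eq_abs, abs_of_pos (inv_pos.mpr h1lam)]
      rw [inv_mul_le_iff₀ h1lam]
      exact hwn
    have hNu : N u ≤ 1 := by
      have : u ∈ C := hball (by rw [mem_closedBall, dist_zero_right]; exact hun)
      rw [hC] at this; exact this
    have hdecomp : emap a b e v = lam • (σ • x) + (1-lam) • u := by
      rw [hu_def, smul_inv_smul₀ h1lam.ne', hw_def]
      abel
    show emap a b e v ∈ C
    rw [hC]
    show N (emap a b e v) ≤ 1
    rw [hdecomp]
    calc N (lam • (σ • x) + (1-lam) • u) ≤ N (lam • (σ • x)) + N ((1-lam) • u) :=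
          hNadd _ _
      _ = lam * N (σ • x) + (1-lam) * N u := by
          rw [hNsmul lam (σ • x), hNsmul (1-lam) u, abs_of_nonneg hlam0,
            abs_of_nonneg h1lam.le]
      _ ≤ lam * 1 + (1-lam) * 1 :=
          add_le_add (mul_le_mul_of_nonneg_left hNσx hlam0)
            (mul_le_mul_of_nonneg_left hNu h1lam.le)
      _ = 1 := by ring
  -- volume contradiction
  have him := hmax S hsub
  rw [hSim, Measure.addHaar_image_linearMap, hdet', vol_cb, vol_cb] at him
  have hπ : (0 : ENNReal) < ENNReal.ofReal Real.pi := ENNReal.ofReal_pos.mpr Real.pi_pos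
  have h1 : ENNReal.ofReal |a*b| * ((ENNReal.ofReal 1)^2 * ENNReal.ofReal Real.pi)
      = ENNReal.ofReal (a*b) * ENNReal.ofReal Real.pi := by
    rw [abs_of_pos (mul_pos ha hb)]
    norm_num
  rw [h1] at him
  have h2 : (ENNReal.ofReal r)^2 = ENNReal.ofReal (r^2) := by
    rw [← ENNReal.ofReal_pow hr.le]
  rw [h2] at him
  have h3 : ENNReal.ofReal (a*b) ≤ ENNReal.ofReal (r^2) :=
    (ENNReal.mul_le_mul_iff_left hπ.ne' ENNReal.ofReal_ne_top).mp him
  have h4 : a*b ≤ r^2 := (ENNReal.ofReal_le_ofReal_iff (by positivity)).mp h3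
  linarith

/-- Let `N` be a norm on `ℝ²` with unit ball `C = {N ≤ 1}` (so `R = 1`), and let
`B(0,r)` be the maximal-area ellipse contained in `C`.  With
`J = ℋ²_N(C)/|C| = π R²/|C|` (Kirchheim's lemma), one has
`R²/r² ≥ J ≥ R²/(2r²)`; in particular `L²/J ≤ 2` for `L = R/r`. -/
theorem stmt11 (N : EuclideanSpace ℝ (Fin 2) → ℝ)
    (hN0 : ∀ x, N x = 0 ↔ x = 0)
    (hNadd : ∀ x y, N (x + y) ≤ N x + N y)
    (hNsmul : ∀ (c : ℝ) (x), N (c • x) = |c| * N x)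
    (C : Set (EuclideanSpace ℝ (Fin 2))) (hC : C = {x | N x ≤ 1})
    (r : ℝ) (hr : 0 < r) (hball : closedBall (0 : EuclideanSpace ℝ (Fin 2)) r ⊆ C)
    (hmax : ∀ S : EuclideanSpace ℝ (Fin 2) ≃ₗ[ℝ] EuclideanSpace ℝ (Fin 2),
      (S '' closedBall 0 1) ⊆ C →
        volume (S '' closedBall 0 1) ≤ volume (closedBall (0 : EuclideanSpace ℝ (Fin 2)) r))
    (J : ℝ) (hJ : J = Real.pi * 1 ^ 2 / (volume C).toReal) :
    1 / r ^ 2 ≥ J ∧ J ≥ 1 / (2 * r ^ 2) ∧ (1 / r) ^ 2 / J ≤ 2 := by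
  have hCsub : C ⊆ closedBall 0 (Real.sqrt 2 * r) := fun y hy => by
    rw [mem_closedBall, dist_zero_right]
    exact john N hNadd hNsmul C hC r hr hball hmax hy
  have hCb : volume C ≤ volume (closedBall (0:V2) (Real.sqrt 2 * r)) := measure_mono hCsub
  have hCa : volume (closedBall (0:V2) r) ≤ volume C := measure_mono hball
  rw [vol_cb] at hCa hCb
  have hub' : (ENNReal.ofReal (Real.sqrt 2 * r))^2 * ENNReal.ofReal Real.pi ≠ ⊤ :=
    ENNReal.mul_ne_top (ENNReal.pow_ne_top ENNReal.ofReal_ne_top) ENNReal.ofReal_ne_top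
  have hfin : volume C ≠ ⊤ := by
    intro h
    rw [h] at hCb
    exact hub' (top_le_iff.mp hCb)
  set volC := (volume C).toReal with hvolC_def
  have h22 : (Real.sqrt 2)^2 = 2 := Real.sq_sqrt (by norm_num)
  have hlb : r^2 * Real.pi ≤ volC := by
    have := ENNReal.toReal_mono hfin hCa
    rwa [ENNReal.toReal_mul, ENNReal.toReal_pow, ENNReal.toReal_ofReal hr.le,
      ENNReal.toReal_ofReal Real.pi_pos.le] at this
  have hub : volC ≤ 2 * r^2 * Real.pi := by
    have := ENNReal.toReal_mono hub' hCb
    rw [ENNReal.toReal_mul, ENNReal.toReal_pow, ENNReal.toReal_ofReal (by positivity),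
      ENNReal.toReal_ofReal Real.pi_pos.le] at this
    calc volC ≤ (Real.sqrt 2 * r)^2 * Real.pi := this
      _ = 2 * r^2 * Real.pi := by rw [mul_pow, h22]
  have hvol0 : 0 < volC := lt_of_lt_of_le (by positivity) hlb
  have hJpos : 0 < J := by rw [hJ]; positivity
  refine ⟨?_, ?_, ?_⟩
  · rw [ge_iff_le, hJ, div_le_div_iff₀ hvol0 (by positivity)]
    nlinarith
  · rw [ge_iff_le, hJ, div_le_div_iff₀ (by positivity) hvol0]
    nlinarith
  · rw [div_le_iff₀ hJpos]
    have h1r : (1/r:ℝ)^2 = 1/r^2 := by rw [div_pow, one_pow]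
    have hq : 2 * J = 2*Real.pi/volC := by rw [hJ]; ring
    rw [h1r, hq, div_le_div_iff₀ (by positivity) hvol0]
    nlinarith
end
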